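/- arXiv:2412.00240 — 7 statements merged into one kernel-verified Lean document; each statement's English description precedes it below -/
import Mathlib

section
/- Let α ∈ (0,1] and t > 0. If f and g are α-differentiable at t, then the product fg is α-differentiable at t and T^α(fg)(t) = g(t)·T^α f(t) + f(t)·T^α g(t). -/
open Filter Topology

/-- `f` is α-differentiable at `t` with conformable fractional derivative `L`:
`lim_{δ→0} (f (t + δ t^{1-α}) - f t)/δ = L`. -/
def HasConformableDerivAt (α : ℝ) (f : ℝ → ℝ) (L : ℝ) (t : ℝ) : Prop :=
  Tendsto (fun δ : ℝ => (f (t + δ * t ^ (1 - α)) - f t) / δ) (𝓝[≠] (0 : ℝ)) (𝓝 L)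

theorem conformable_deriv_mul (α t : ℝ) (hα : α ∈ Set.Ioc (0 : ℝ) 1)
    (ht : 0 < t) (f g : ℝ → ℝ) (L M : ℝ)
    (hf : HasConformableDerivAt α f L t) (hg : HasConformableDerivAt α g M t) :
    HasConformableDerivAt α (fun x => f x * g x) (g t * L + f t * M) t := by
  unfold HasConformableDerivAt at *
  have hid : Tendsto (fun δ : ℝ => δ) (𝓝[≠] (0:ℝ)) (𝓝 0) :=
    tendsto_id.mono_left nhdsWithin_le_nhds
  -- f(t + δ t^(1-α)) → f t
  have hfc : Tendsto (fun δ : ℝ => f (t + δ * t ^ (1 - α))) (𝓝[≠] (0:ℝ)) (𝓝 (f t)) := by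
    have h1 : Tendsto (fun δ : ℝ =>
        (f (t + δ * t ^ (1 - α)) - f t) / δ * δ) (𝓝[≠] (0:ℝ)) (𝓝 (L * 0)) :=
      hf.mul hid
    rw [mul_zero] at h1
    have h2 : Tendsto (fun δ : ℝ => f (t + δ * t ^ (1 - α)) - f t) (𝓝[≠] (0:ℝ)) (𝓝 0) := by
      refine h1.congr' ?_
      filter_upwards [self_mem_nhdsWithin] with δ hδ
      have hδ' : δ ≠ 0 := hδ
      field_simp
    have := h2.add (tendsto_const_nhds (x := f t))
    simpa using this
  have key : Tendsto (fun δ : ℝ =>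
      f (t + δ * t ^ (1 - α)) * ((g (t + δ * t ^ (1 - α)) - g t) / δ)
        + g t * ((f (t + δ * t ^ (1 - α)) - f t) / δ))
      (𝓝[≠] (0:ℝ)) (𝓝 (f t * M + g t * L)) :=
    (hfc.mul hg).add (tendsto_const_nhds.mul hf)
  rw [add_comm (g t * L)]
  refine key.congr' ?_
  filter_upwards [self_mem_nhdsWithin] with δ hδ
  have hδ' : δ ≠ 0 := hδ
  field_simp
  ring
end

section
/- Chain rule for the conformable fractional derivative: let α ∈ (0,1] and x > 0, let v : (0,∞) → ℝ be differentiable at x with v(x) > 0, and let f : (0,∞) → ℝ be differentiable at v(x). Then f ∘ v is α-differentiable at x and T^α(f ∘ v)(x) = (T^α f)(v(x)) · v(x)^{α−1} · (T^α v)(x), where (T^α f)(v(x)) denotes the conformable fractional derivative of f evaluated at the point v(x). -/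
open Filter Topology

lemma hasConformableDerivAt_of_hasDerivAt (α x : ℝ) (hx : 0 < x) (g : ℝ → ℝ) (g' : ℝ)
    (hg : HasDerivAt g g' x) : HasConformableDerivAt α g (x ^ (1 - α) * g') x := by
  set c := x ^ (1 - α) with hc
  have hcpos : (0:ℝ) < c := Real.rpow_pos_of_pos hx _
  have h1 : Tendsto (fun δ : ℝ => x + δ * c) (𝓝[≠] (0:ℝ)) (𝓝[≠] x) := by
    rw [tendsto_nhdsWithin_iff]
    constructor
    · have : Tendsto (fun δ : ℝ => x + δ * c) (𝓝 (0:ℝ)) (𝓝 (x + 0 * c)) := by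
        exact (tendsto_id.mul_const c).const_add x
      simpa using this.mono_left nhdsWithin_le_nhds
    · filter_upwards [self_mem_nhdsWithin] with δ hδ
      simp only [Set.mem_compl_iff, Set.mem_singleton_iff] at hδ ⊢
      intro h
      have : δ * c = 0 := by linarith
      rcases mul_eq_zero.mp this with h | h
      · exact hδ h
      · exact absurd h hcpos.ne'
  have h2 : Tendsto (fun δ : ℝ => slope g x (x + δ * c)) (𝓝[≠] (0:ℝ)) (𝓝 g') :=
    (hasDerivAt_iff_tendsto_slope.mp hg).comp h1
  have h3 : Tendsto (fun δ : ℝ => c * slope g x (x + δ * c)) (𝓝[≠] (0:ℝ)) (𝓝 (c * g')) :=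
    h2.const_mul c
  refine h3.congr' ?_
  filter_upwards [self_mem_nhdsWithin] with δ hδ
  have hδ0 : δ ≠ 0 := hδ
  rw [slope_def_field]
  field_simp
  rw [← hc]
  ring

/-- Chain rule: `T^α (f ∘ v) (x) = (T^α f)(v x) · (v x)^{α-1} · (T^α v)(x)`,
where `(T^α f)(v x) = (v x)^{1-α} f'(v x)` and `(T^α v)(x) = x^{1-α} v'(x)`. -/
theorem conformable_deriv_chain_rule (α x : ℝ) (hα : α ∈ Set.Ioc (0 : ℝ) 1)
    (hx : 0 < x) (v f : ℝ → ℝ) (v' f' : ℝ)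
    (hv : HasDerivAt v v' x) (hvx : 0 < v x) (hf : HasDerivAt f f' (v x)) :
    HasConformableDerivAt α (f ∘ v)
      (((v x) ^ (1 - α) * f') * (v x) ^ (α - 1) * (x ^ (1 - α) * v')) x := by
  have hg : HasDerivAt (f ∘ v) (f' * v') x := hf.comp x hv
  have key : ((v x) ^ (1 - α) * f') * (v x) ^ (α - 1) * (x ^ (1 - α) * v')
      = x ^ (1 - α) * (f' * v') := by
    have : (v x) ^ (1 - α) * (v x) ^ (α - 1) = 1 := by
      rw [← Real.rpow_add hvx]; norm_num
    calc ((v x) ^ (1 - α) * f') * (v x) ^ (α - 1) * (x ^ (1 - α) * v')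
        = ((v x) ^ (1 - α) * (v x) ^ (α - 1)) * (x ^ (1 - α) * (f' * v')) := by ring
      _ = x ^ (1 - α) * (f' * v') := by rw [this]; ring
  rw [key]
  exact hasConformableDerivAt_of_hasDerivAt α x hx (f ∘ v) (f' * v') hg
end

section
/- Let α ∈ (0,1], a ≥ 0, and let f be continuous on [a,∞). Then for every t > a, the function I^α_a f is α-differentiable at t and T^α(I^α_a f)(t) = f(t). -/
open Filter Topology

/-- The α-fractional integral `I^α_a f (t) = ∫_a^t x^{α-1} f(x) dx` is an
antiderivative in the conformable sense: `T^α (I^α_a f)(t) = f(t)`. -/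
theorem conformable_deriv_fractional_integral (α a t : ℝ) (hα : α ∈ Set.Ioc (0 : ℝ) 1)
    (ha : 0 ≤ a) (hat : a < t) (f : ℝ → ℝ) (hf : ContinuousOn f (Set.Ici a)) :
    HasConformableDerivAt α (fun s => ∫ x in a..s, x ^ (α - 1) * f x) (f t) t := by
  have ht0 : 0 < t := lt_of_le_of_lt ha hat
  set g : ℝ → ℝ := fun x => x ^ (α - 1) * f x with hg
  -- interval integrability on [a, t]
  have hrpow : IntervalIntegrable (fun x : ℝ => x ^ (α - 1)) MeasureTheory.volume a t := by
    apply intervalIntegral.intervalIntegrable_rpow'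
    linarith [hα.1]
  have hint : IntervalIntegrable g MeasureTheory.volume a t := by
    have hcont : ContinuousOn f (Set.uIcc a t) := by
      apply hf.mono
      rw [Set.uIcc_of_le hat.le]
      exact Set.Icc_subset_Ici_self
    have heq : g = fun x => f x * x ^ (α - 1) := funext fun x => mul_comm _ _
    rw [heq]
    exact hrpow.continuousOn_mul hcont
  -- continuity of integrand at t
  have hconta : ContinuousAt g t := by
    apply ContinuousAt.mul
    · exact (Real.continuousAt_rpow_const t (α - 1) (Or.inl ht0.ne')).comp continuousAt_id
    · exact hf.continuousAt (Ici_mem_nhds hat)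
  -- strong measurability at 𝓝 t
  have hmeas : StronglyMeasurableAtFilter g (𝓝 t) := by
    have hgc : ContinuousOn g (Set.Ioi a) := by
      apply ContinuousOn.mul
      · intro x hx
        exact ((Real.continuousAt_rpow_const x (α - 1)
          (Or.inl (lt_of_le_of_lt ha hx).ne')).comp continuousAt_id).continuousWithinAt
      · exact hf.mono Set.Ioi_subset_Ici_self
    exact ContinuousOn.stronglyMeasurableAtFilter isOpen_Ioi hgc t hat
  have hF : HasDerivAt (fun s => ∫ x in a..s, g x) (g t) t :=
    intervalIntegral.integral_hasDerivAt_right hint hmeas hconta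
  -- compose with the affine map δ ↦ t + δ * t^(1-α)
  set c : ℝ := t ^ (1 - α) with hc
  have hinner : HasDerivAt (fun δ : ℝ => t + δ * c) c 0 := by
    simpa using ((hasDerivAt_id (0 : ℝ)).mul_const c).const_add t
  have hcomp : HasDerivAt (fun δ : ℝ => ∫ x in a..(t + δ * c), g x) (g t * c) 0 := by
    have hF' : HasDerivAt (fun s => ∫ x in a..s, g x) (g t) (t + 0 * c) := by
      simpa using hF
    exact hF'.comp 0 hinner
  have hval : g t * c = f t := by
    have : t ^ (α - 1) * t ^ (1 - α) = 1 := by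
      rw [← Real.rpow_add ht0]
      norm_num
    rw [hg, hc, mul_right_comm, this, one_mul]
  rw [hval] at hcomp
  have := hasDerivAt_iff_tendsto_slope.mp hcomp
  unfold HasConformableDerivAt
  refine this.congr' ?_
  filter_upwards [self_mem_nhdsWithin] with δ hδ
  simp [slope_def_field, div_eq_div_iff, hc]
end

section
/- Conformable Green's first identity (vanishing boundary term): let α ∈ (0,1], let Ω ⊆ (0,∞)^n be open, let u : Ω → ℝ be twice continuously differentiable, and let v : Ω → ℝ be continuously differentiable with compact support in Ω. Then ∫_Ω ( ∑_{k=1}^n D^α_{x_k} u · D^α_{x_k} v + v · ∑_{k=1}^n D^α_{x_k}(D^α_{x_k} u) ) d_α x = 0. -/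
open Filter Topology MeasureTheory

set_option maxHeartbeats 1000000


open Filter Topology MeasureTheory

variable {n : ℕ}

lemma hasDerivAt_comp_update {f : (Fin n → ℝ) → ℝ} {x : Fin n → ℝ}
    {φ : (Fin n → ℝ) →L[ℝ] ℝ} (k : Fin n)
    (hf : HasFDerivAt f φ x) :
    HasDerivAt (fun t : ℝ => f (Function.update x k t)) (φ (Pi.single k 1)) (x k) := by
  have h1 : HasDerivAt (fun s : ℝ => Function.update x k s) (Pi.single k 1) (x k) :=
    hasDerivAt_update x k (x k)
  have hf' : HasFDerivAt f φ (Function.update x k (x k)) := by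
    rwa [Function.update_eq_self]
  exact hf'.comp_hasDerivAt (x k) h1

lemma deriv_comp_update {f : (Fin n → ℝ) → ℝ} {x : Fin n → ℝ} (k : Fin n)
    (hf : DifferentiableAt ℝ f x) :
    deriv (fun t : ℝ => f (Function.update x k t)) (x k) = fderiv ℝ f x (Pi.single k 1) :=
  (hasDerivAt_comp_update k hf.hasFDerivAt).deriv

lemma contDiffAt_finset_prod {ι : Type*} {m : WithTop ℕ∞} {s : Finset ι}
    {f : ι → (Fin n → ℝ) → ℝ} {x : Fin n → ℝ}
    (h : ∀ i ∈ s, ContDiffAt ℝ m (f i) x) :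
    ContDiffAt ℝ m (fun y => ∏ i ∈ s, f i y) x := by
  classical
  induction s using Finset.induction_on with
  | empty => simpa using contDiffAt_const (c := (1:ℝ))
  | insert _ _ ha ih =>
      simp only [Finset.prod_insert ha]
      exact (h _ (Finset.mem_insert_self _ _)).mul
        (ih fun i hi => h i (Finset.mem_insert_of_mem hi))

lemma integral_fderiv_apply_eq_zero {W : (Fin n → ℝ) → ℝ}
    (hW : ContDiff ℝ 1 W) (hWc : HasCompactSupport W) (w : Fin n → ℝ) :
    ∫ x, fderiv ℝ W x w = 0 := by
  obtain ⟨R, hR0, hRsub⟩ := hWc.isBounded.subset_closedBall_lt 0 0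
  let g : ContDiffBump (0 : Fin n → ℝ) := ⟨R + 1, R + 2, by linarith, by linarith⟩
  obtain ⟨C, hC⟩ := ContDiff.lipschitzWith_of_hasCompactSupport hWc hW one_ne_zero
  obtain ⟨D, hD⟩ := ContDiff.lipschitzWith_of_hasCompactSupport g.hasCompactSupport
    (g.contDiff (n := 1)) one_ne_zero
  have key := LipschitzWith.integral_lineDeriv_mul_eq (μ := volume) hC hD
    g.hasCompactSupport w
  have h1 : ∀ x, lineDeriv ℝ W x w * g x = fderiv ℝ W x w := by
    intro x
    by_cases hx : x ∈ tsupport W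
    · rw [(hW.differentiable one_ne_zero x).lineDeriv_eq_fderiv,
        g.one_of_mem_closedBall (Metric.closedBall_subset_closedBall (show R ≤ R + 1 by linarith) (hRsub hx)),
        mul_one]
    · have hz : W =ᶠ[𝓝 x] fun _ => 0 := by
        filter_upwards [(isClosed_tsupport W).isOpen_compl.mem_nhds hx] with y hy
        exact image_eq_zero_of_notMem_tsupport hy
      rw [(hW.differentiable one_ne_zero x).lineDeriv_eq_fderiv, hz.fderiv_eq, fderiv_fun_const]
      simp
  have h2 : ∀ x, lineDeriv ℝ (g : (Fin n → ℝ) → ℝ) x (-w) * W x = 0 := by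
    intro x
    by_cases hx : x ∈ tsupport W
    · have hmem : x ∈ Metric.ball (0 : Fin n → ℝ) (R + 1) :=
        Metric.closedBall_subset_ball (show R < R + 1 by linarith) (hRsub hx)
      have hg1 : (g : (Fin n → ℝ) → ℝ) =ᶠ[𝓝 x] fun _ => 1 := by
        filter_upwards [Metric.isOpen_ball.mem_nhds hmem] with y hy
        exact g.one_of_mem_closedBall (Metric.ball_subset_closedBall hy)
      rw [hg1.lineDeriv_eq, (differentiableAt_const (1:ℝ)).lineDeriv_eq_fderiv, fderiv_fun_const]
      simp
    · simp [image_eq_zero_of_notMem_tsupport hx]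
  calc ∫ x, fderiv ℝ W x w = ∫ x, lineDeriv ℝ W x w * g x := by simp_rw [h1]
    _ = ∫ x, lineDeriv ℝ (g : (Fin n → ℝ) → ℝ) x (-w) * W x := key
    _ = 0 := by simp_rw [h2]; exact integral_zero _ _

/-- The conformable partial derivative of order `α` in the `k`-th coordinate:
`D^α_{x_k} f (x) = x_k^{1-α} ∂f/∂x_k (x)`. -/
noncomputable def confPDeriv (α : ℝ) {n : ℕ} (f : (Fin n → ℝ) → ℝ) (k : Fin n)
    (x : Fin n → ℝ) : ℝ :=
  (x k) ^ (1 - α) * deriv (fun t : ℝ => f (Function.update x k t)) (x k)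

/-- Conformable Green's first identity with vanishing boundary term:
`∫_Ω (∑ₖ D^α_{x_k} u · D^α_{x_k} v + v · ∑ₖ D^α_{x_k}(D^α_{x_k} u)) d_α x = 0`,
where `d_α x` has density `∏ₖ x_k^{α-1}` w.r.t. Lebesgue measure. -/
theorem conformable_green_first_identity (α : ℝ) (hα : α ∈ Set.Ioc (0 : ℝ) 1)
    (n : ℕ) (Ω : Set (Fin n → ℝ)) (hΩ : IsOpen Ω)
    (hΩpos : Ω ⊆ {x : Fin n → ℝ | ∀ k, 0 < x k})
    (u v : (Fin n → ℝ) → ℝ)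
    (hu : ContDiffOn ℝ 2 u Ω) (hv : ContDiffOn ℝ 1 v Ω)
    (hvsupp : HasCompactSupport v) (hvsubset : tsupport v ⊆ Ω) :
    ∫ x in Ω,
      ((∑ k, confPDeriv α u k x * confPDeriv α v k x)
        + v x * ∑ k, confPDeriv α (confPDeriv α u k) k x) * ∏ k, (x k) ^ (α - 1)
      = 0 := by
  classical
  set P : Fin n → (Fin n → ℝ) → ℝ := fun k y => fderiv ℝ u y (Pi.single k 1) with hPdef
  set W : Fin n → (Fin n → ℝ) → ℝ := fun k y =>
    v y * ((y k) ^ (1 - α) * (P k y * ∏ j ∈ Finset.univ.erase k, (y j) ^ (α - 1))) with hWdef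
  have hu1 : ∀ y ∈ Ω, DifferentiableAt ℝ u y := fun y hy =>
    (hu.contDiffAt (hΩ.mem_nhds hy)).differentiableAt (by norm_num)
  have hv1 : ∀ y ∈ Ω, DifferentiableAt ℝ v y := fun y hy =>
    (hv.contDiffAt (hΩ.mem_nhds hy)).differentiableAt one_ne_zero
  -- regularity of P k on Ω
  have hPc : ∀ k, ContDiffOn ℝ 1 (P k) Ω := by
    intro k
    have h2 : ContDiffOn ℝ 1 (fun y => fderivWithin ℝ u Ω y) Ω :=
      hu.fderivWithin hΩ.uniqueDiffOn (by norm_num)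
    exact (h2.clm_apply (contDiffOn_const (c := Pi.single k (1:ℝ)))).congr fun y hy => by
      simp only [hPdef, fderivWithin_of_isOpen hΩ hy]
  have hPd : ∀ k, ∀ y ∈ Ω, DifferentiableAt ℝ (P k) y := fun k y hy =>
    ((hPc k).contDiffAt (hΩ.mem_nhds hy)).differentiableAt one_ne_zero
  -- W k is globally C¹
  have hWnot : ∀ k, ∀ y, y ∉ tsupport v → W k y = 0 := by
    intro k y hy
    simp [hWdef, image_eq_zero_of_notMem_tsupport hy]
  have hW1 : ∀ k, ContDiff ℝ 1 (W k) := by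
    intro k
    rw [contDiff_iff_contDiffAt]
    intro y
    by_cases hy : y ∈ Ω
    · apply ContDiffOn.contDiffAt _ (hΩ.mem_nhds hy)
      apply hv.mul
      apply ContDiffOn.mul
      · intro z hz
        exact ((Real.contDiffAt_rpow_const_of_ne (ne_of_gt (hΩpos hz k))).comp z
          ((ContinuousLinearMap.proj k : (Fin n → ℝ) →L[ℝ] ℝ).contDiff.contDiffAt)).contDiffWithinAt
      apply ContDiffOn.mul (hPc k)
      intro z hz
      refine (contDiffAt_finset_prod fun j _ => ?_).contDiffWithinAt
      exact (Real.contDiffAt_rpow_const_of_ne (ne_of_gt (hΩpos hz j))).comp z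
        ((ContinuousLinearMap.proj j : (Fin n → ℝ) →L[ℝ] ℝ).contDiff.contDiffAt)
    · have hy' : y ∉ tsupport v := fun h => hy (hvsubset h)
      apply (contDiffAt_const (c := (0:ℝ))).congr_of_eventuallyEq
      filter_upwards [(isClosed_tsupport v).isOpen_compl.mem_nhds hy'] with z hz
      exact hWnot k z hz
  have hWsupp : ∀ k, HasCompactSupport (W k) := fun k => hvsupp.mul_right
  have hWd : ∀ k y, DifferentiableAt ℝ (W k) y := fun k y =>
    ((hW1 k).differentiable one_ne_zero) y
  -- pointwise identity on Ω
  have key : Set.EqOn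
      (fun x => ((∑ k, confPDeriv α u k x * confPDeriv α v k x)
        + v x * ∑ k, confPDeriv α (confPDeriv α u k) k x) * ∏ k, (x k) ^ (α - 1))
      (fun x => ∑ k, fderiv ℝ (W k) x (Pi.single k 1)) Ω := by
    intro x hx
    have hxk : ∀ k, (0:ℝ) < x k := hΩpos hx
    simp only
    rw [add_mul, Finset.sum_mul, Finset.mul_sum, Finset.sum_mul, ← Finset.sum_add_distrib]
    refine Finset.sum_congr rfl fun k _ => ?_
    set C : ℝ := ∏ j ∈ Finset.univ.erase k, (x j) ^ (α - 1) with hCdef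
    set p : ℝ := x k with hpdef
    have hPi : ∏ j, (x j) ^ (α - 1) = p ^ (α - 1) * C :=
      (Finset.mul_prod_erase _ _ (Finset.mem_univ k)).symm
    -- first conformable derivatives
    have hDu : deriv (fun t => u (Function.update x k t)) (x k) = P k x :=
      deriv_comp_update k (hu1 x hx)
    have hDvAt : HasDerivAt (fun t => v (Function.update x k t))
        (fderiv ℝ v x (Pi.single k 1)) (x k) :=
      hasDerivAt_comp_update k (hv1 x hx).hasFDerivAt
    set pv : ℝ := fderiv ℝ v x (Pi.single k 1) with hpvdef
    -- the inner function h
    set h : ℝ → ℝ := fun t => t ^ (1 - α) * P k (Function.update x k t) with hhdef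
    have hPupd : HasDerivAt (fun t => P k (Function.update x k t))
        (fderiv ℝ (P k) x (Pi.single k 1)) (x k) :=
      hasDerivAt_comp_update k (hPd k x hx).hasFDerivAt
    have hrpow : HasDerivAt (fun t : ℝ => t ^ (1 - α))
        ((1 - α) * (x k) ^ (1 - α - 1)) (x k) :=
      Real.hasDerivAt_rpow_const (Or.inl (hxk k).ne')
    have hhd : DifferentiableAt ℝ h (x k) :=
      hrpow.differentiableAt.mul hPupd.differentiableAt
    have hupd_cont : ContinuousAt (fun t : ℝ => Function.update x k t) (x k) :=
      (hasDerivAt_update x k (x k)).continuousAt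
    have hnhds : ∀ᶠ t in 𝓝 (x k), Function.update x k t ∈ Ω := by
      apply hupd_cont.preimage_mem_nhds
      rw [Function.update_eq_self]
      exact hΩ.mem_nhds hx
    -- second conformable derivative
    have hconf2 : confPDeriv α (confPDeriv α u k) k x = p ^ (1 - α) * deriv h (x k) := by
      simp only [confPDeriv]
      congr 1
      apply Filter.EventuallyEq.deriv_eq
      filter_upwards [hnhds] with t ht
      have hyk : Function.update x k t k = t := Function.update_self k t x
      have h3 := deriv_comp_update (x := Function.update x k t) k (hu1 _ ht)
      simp only [Function.update_idem, hyk] at h3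
      simp only [hhdef, hyk, Function.update_idem, hPdef, h3]
    -- compute fderiv of W k in direction single k 1
    have hWeq : (fun t => W k (Function.update x k t))
        = fun t => v (Function.update x k t) * (h t * C) := by
      funext t
      have hprod : ∏ j ∈ Finset.univ.erase k, (Function.update x k t j) ^ (α - 1) = C := by
        refine Finset.prod_congr rfl fun j hj => ?_
        rw [Function.update_of_ne (Finset.ne_of_mem_erase hj)]
      simp only [hWdef, hhdef, Function.update_self, hprod]
      ring
    have hmul := (hDvAt.mul ((hhd.hasDerivAt).mul_const C)).deriv
    rw [Function.update_eq_self] at hmul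
    have hWfd : fderiv ℝ (W k) x (Pi.single k 1)
        = pv * (h (x k) * C) + v x * (deriv h (x k) * C) := by
      rw [← deriv_comp_update k (hWd k x), hWeq]
      exact hmul
    have hhval : h (x k) = p ^ (1 - α) * P k x := by
      simp [hhdef, Function.update_eq_self, hpdef]
    -- first conformable derivatives expressed
    have hcu : confPDeriv α u k x = p ^ (1 - α) * P k x := by
      simp only [confPDeriv, hDu, hpdef]
    have hcv : confPDeriv α v k x = p ^ (1 - α) * pv := by
      simp only [confPDeriv, hDvAt.deriv, hpdef, hpvdef]
    rw [hcu, hcv, hconf2, hPi, hWfd, hhval]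
    have h1 : p ^ (1 - α) * p ^ (α - 1) = 1 := by
      rw [← Real.rpow_add (hxk k)]
      norm_num
    linear_combination (p ^ (1 - α) * P k x * pv * C + v x * deriv h (x k) * C) * h1
  rw [setIntegral_congr_fun hΩ.measurableSet key]
  have hvanish : ∀ x, x ∉ Ω → ∑ k, fderiv ℝ (W k) x (Pi.single k 1) = 0 := by
    intro x hx
    refine Finset.sum_eq_zero fun k _ => ?_
    have hx' : x ∉ tsupport v := fun h => hx (hvsubset h)
    have hz : W k =ᶠ[𝓝 x] fun _ => 0 := by
      filter_upwards [(isClosed_tsupport v).isOpen_compl.mem_nhds hx'] with z hz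
      exact hWnot k z hz
    rw [hz.fderiv_eq, fderiv_fun_const]
    simp
  rw [setIntegral_eq_integral_of_forall_compl_eq_zero hvanish]
  have hint : ∀ k ∈ Finset.univ, Integrable (fun x => fderiv ℝ (W k) x (Pi.single k 1)) := by
    intro k _
    apply Continuous.integrable_of_hasCompactSupport
    · exact ((hW1 k).continuous_fderiv one_ne_zero).clm_apply continuous_const
    · exact ((hWsupp k).fderiv ℝ).comp_left (g := fun φ : (Fin n → ℝ) →L[ℝ] ℝ => φ (Pi.single k 1)) rfl
  rw [integral_finset_sum _ hint]
  exact Finset.sum_eq_zero fun k _ => integral_fderiv_apply_eq_zero (hW1 k) (hWsupp k) _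
end

section
/- Anisotropic conformable Picone identity (equality of the two forms): let α ∈ (0,1], let Ω ⊆ (0,∞)^n be open, let p_k > 1 for k = 1,…,n, and let u, v : Ω → ℝ be differentiable with u ≥ 0 and v > 0 on Ω. Then R(u,v)(x) = L(u,v)(x) for every x ∈ Ω. -/
open Filter Topology

theorem confPDeriv_quotient {n : ℕ} (k : Fin n) (x : Fin n → ℝ) (u v : (Fin n → ℝ) → ℝ)
    (hud : DifferentiableAt ℝ u x) (hvd : DifferentiableAt ℝ v x)
    (q : ℝ) (hq : 1 < q) (hua : 0 ≤ u x) (hva : 0 < v x) (α : ℝ) :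
    confPDeriv α (fun y => u y ^ q / v y ^ (q-1)) k x
      = q * (u x / v x) ^ (q-1) * confPDeriv α u k x
        - (q-1) * (u x / v x) ^ q * confPDeriv α v k x := by
  have hupd : Function.update x k (x k) = x := Function.update_eq_self k x
  have hg : HasDerivAt (fun t => u (Function.update x k t))
      ((fderiv ℝ u x) (Pi.single k 1)) (x k) := by
    refine HasFDerivAt.comp_hasDerivAt _ ?_ (hasDerivAt_update x k (x k))
    rw [hupd]; exact hud.hasFDerivAt
  have hh : HasDerivAt (fun t => v (Function.update x k t))
      ((fderiv ℝ v x) (Pi.single k 1)) (x k) := by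
    refine HasFDerivAt.comp_hasDerivAt _ ?_ (hasDerivAt_update x k (x k))
    rw [hupd]; exact hvd.hasFDerivAt
  set G := (fderiv ℝ u x) (Pi.single k 1)
  set H := (fderiv ℝ v x) (Pi.single k 1)
  have hgp : HasDerivAt (fun t => u (Function.update x k t) ^ q)
      (G * q * u x ^ (q-1)) (x k) := by
    have := hg.rpow_const (p := q) (Or.inr hq.le)
    simpa [hupd] using this
  have hhp : HasDerivAt (fun t => v (Function.update x k t) ^ (q-1))
      (H * (q-1) * v x ^ (q-1-1)) (x k) := by
    have := hh.rpow_const (p := q-1) (Or.inl (by rw [hupd]; exact hva.ne'))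
    simpa [hupd] using this
  have hvp : v x ^ (q-1) ≠ 0 := (Real.rpow_pos_of_pos hva _).ne'
  have hF := hgp.div hhp (by simpa [hupd] using hvp)
  have hd : deriv (fun t => u (Function.update x k t) ^ q / v (Function.update x k t) ^ (q-1)) (x k)
      = (G * q * u x ^ (q-1) * v x ^ (q-1) - u x ^ q * (H * (q-1) * v x ^ (q-1-1))) / (v x ^ (q-1))^2 := by
    have hF' := hF.deriv
    simp only [hupd] at hF'
    exact hF'
  have hgd : deriv (fun t => u (Function.update x k t)) (x k) = G := hg.deriv
  have hhd : deriv (fun t => v (Function.update x k t)) (x k) = H := hh.deriv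
  simp only [confPDeriv, hd, hgd, hhd]
  rcases eq_or_lt_of_le hua with h0 | hua'
  · rw [← h0, Real.zero_rpow (by linarith), Real.zero_rpow (by linarith : q ≠ 0),
      zero_div, Real.zero_rpow (by linarith), Real.zero_rpow (by linarith : q ≠ 0)]
    ring
  · have h1 : u x ^ (q-1) = u x ^ q / u x := by
      rw [Real.rpow_sub hua', Real.rpow_one]
    have h2 : v x ^ (q-1) = v x ^ q / v x := by
      rw [Real.rpow_sub hva, Real.rpow_one]
    have h3 : v x ^ (q-1-1) = v x ^ q / (v x * v x) := by
      rw [show q-1-1 = q - 2 by ring, Real.rpow_sub hva, Real.rpow_two, sq]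
    rw [Real.div_rpow hua hva.le, Real.div_rpow hua hva.le, h1, h2, h3]
    have hvq : v x ^ q ≠ 0 := (Real.rpow_pos_of_pos hva _).ne'
    field_simp

/-- The first form `R(u,v)` of the anisotropic conformable Picone identity. -/
noncomputable def piconeR (α : ℝ) {n : ℕ} (p : Fin n → ℝ)
    (u v : (Fin n → ℝ) → ℝ) (x : Fin n → ℝ) : ℝ :=
  (∑ k, |confPDeriv α u k x| ^ (p k))
    - ∑ k, confPDeriv α (fun y => u y ^ (p k) / v y ^ (p k - 1)) k x
        * |confPDeriv α v k x| ^ (p k - 2) * confPDeriv α v k x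

/-- The second form `L(u,v)` of the anisotropic conformable Picone identity. -/
noncomputable def piconeL (α : ℝ) {n : ℕ} (p : Fin n → ℝ)
    (u v : (Fin n → ℝ) → ℝ) (x : Fin n → ℝ) : ℝ :=
  (∑ k, |confPDeriv α u k x| ^ (p k))
    + (∑ k, (p k - 1) * (u x / v x) ^ (p k) * |confPDeriv α v k x| ^ (p k))
    - ∑ k, p k * (u x / v x) ^ (p k - 1) * |confPDeriv α v k x| ^ (p k - 2)
        * confPDeriv α u k x * confPDeriv α v k x

/-- Anisotropic conformable Picone identity: `R(u,v) = L(u,v)` on `Ω`. -/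
theorem anisotropic_conformable_picone_eq (α : ℝ) (hα : α ∈ Set.Ioc (0 : ℝ) 1)
    (n : ℕ) (Ω : Set (Fin n → ℝ)) (hΩ : IsOpen Ω)
    (hΩpos : Ω ⊆ {x : Fin n → ℝ | ∀ k, 0 < x k})
    (p : Fin n → ℝ) (hp : ∀ k, 1 < p k)
    (u v : (Fin n → ℝ) → ℝ)
    (hu : DifferentiableOn ℝ u Ω) (hv : DifferentiableOn ℝ v Ω)
    (hu0 : ∀ x ∈ Ω, 0 ≤ u x) (hv0 : ∀ x ∈ Ω, 0 < v x) :
    ∀ x ∈ Ω, piconeR α p u v x = piconeL α p u v x := by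
  intro x hx
  have hxn : Ω ∈ 𝓝 x := hΩ.mem_nhds hx
  have hud : DifferentiableAt ℝ u x := hu.differentiableAt hxn
  have hvd : DifferentiableAt ℝ v x := hv.differentiableAt hxn
  have hua : 0 ≤ u x := hu0 x hx
  have hva : 0 < v x := hv0 x hx
  have key : ∀ k : Fin n,
      confPDeriv α (fun y => u y ^ (p k) / v y ^ (p k - 1)) k x
        * |confPDeriv α v k x| ^ (p k - 2) * confPDeriv α v k x
      = p k * (u x / v x) ^ (p k - 1) * |confPDeriv α v k x| ^ (p k - 2)
          * confPDeriv α u k x * confPDeriv α v k x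
        - (p k - 1) * (u x / v x) ^ (p k) * |confPDeriv α v k x| ^ (p k) := by
    intro k
    set q := p k with hqdef
    set Dv := confPDeriv α v k x with hDvdef
    have hq : 1 < q := hp k
    rw [confPDeriv_quotient k x u v hud hvd q hq hua hva α]
    have habs : |Dv| ^ (q-2) * Dv * Dv = |Dv| ^ q := by
      by_cases h : Dv = 0
      · simp [h, Real.zero_rpow (by linarith : q ≠ 0)]
      · have h2 : Dv * Dv = |Dv| ^ (2:ℝ) := by
          rw [Real.rpow_two, sq, abs_mul_abs_self]
        rw [mul_assoc, h2, ← Real.rpow_add (abs_pos.2 h)]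
        norm_num
    linear_combination (-(q-1)) * (u x / v x) ^ q * habs
  simp only [piconeR, piconeL]
  rw [Finset.sum_congr rfl (fun k _ => key k), Finset.sum_sub_distrib]
  ring
end

section
/- Anisotropic conformable Hardy type inequality with weights (compactly supported case): let α ∈ (0,1], let Ω ⊆ (0,∞)^n be open, let p_k > 1 and L_k ∈ ℝ for k = 1,…,n, and let W_k, H_k : Ω → ℝ be continuous with W_k ≥ 0 and H_k ≥ 0. Let v : Ω → ℝ be continuously differentiable with v > 0 on Ω, and assume that for each k the function F_k(x) = W_k(x)·|D^α_{x_k} v(x)|^{p_k−2}·D^α_{x_k} v(x) is continuously differentiable on Ω and satisfies −D^α_{x_k} F_k(x) ≥ L_k·H_k(x)·v(x)^{p_k−1} for all x ∈ Ω. Then for every nonnegative continuously differentiable function u with compact support in Ω: ∑_{k=1}^n ∫_Ω W_k(x)·|D^α_{x_k} u(x)|^{p_k} d_α x ≥ ∑_{k=1}^n L_k ∫_Ω H_k(x)·u(x)^{p_k} d_α x. -/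
open Filter Topology MeasureTheory

lemma sec_hasDerivAt {n : ℕ} {f : (Fin n → ℝ) → ℝ} (k : Fin n) {x : Fin n → ℝ}
    (hf : DifferentiableAt ℝ f x) :
    HasDerivAt (fun t => f (Function.update x k t)) (fderiv ℝ f x (Pi.single k 1)) (x k) := by
  have h1 : HasFDerivAt f (fderiv ℝ f x) (Function.update x k (x k)) := by
    rw [Function.update_eq_self]; exact hf.hasFDerivAt
  exact h1.comp_hasDerivAt (x k) (hasDerivAt_update x k (x k))

lemma sec_hasDerivAt' {n : ℕ} {f : (Fin n → ℝ) → ℝ} (k : Fin n) {x : Fin n → ℝ}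
    (hf : DifferentiableAt ℝ f x) :
    HasDerivAt (fun t => f (Function.update x k t))
      (deriv (fun t => f (Function.update x k t)) (x k)) (x k) := by
  have h := sec_hasDerivAt k hf
  rwa [h.deriv]

lemma sec_ev_zero {n : ℕ} {f : (Fin n → ℝ) → ℝ} (k : Fin n) {x : Fin n → ℝ}
    (hx : x ∉ tsupport f) :
    (fun t => f (Function.update x k t)) =ᶠ[𝓝 (x k)] fun _ => (0:ℝ) := by
  have hopen : IsOpen (tsupport f)ᶜ := (isClosed_tsupport f).isOpen_compl
  have hmem : ∀ᶠ t in 𝓝 (x k), Function.update x k t ∈ (tsupport f)ᶜ := by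
    have hc : ContinuousAt (fun s => Function.update x k s) (x k) :=
      (hasDerivAt_update x k (x k)).continuousAt
    have : (tsupport f)ᶜ ∈ 𝓝 (Function.update x k (x k)) := by
      rw [Function.update_eq_self]; exact hopen.mem_nhds hx
    exact hc.preimage_mem_nhds this
  exact hmem.mono fun t ht => image_eq_zero_of_notMem_tsupport ht

lemma pd_zero {n : ℕ} {f : (Fin n → ℝ) → ℝ} (k : Fin n) {x : Fin n → ℝ}
    (hx : x ∉ tsupport f) :
    deriv (fun t => f (Function.update x k t)) (x k) = 0 := by
  rw [(sec_ev_zero k hx).deriv_eq, deriv_const]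

lemma sec_loc_zero_hasDerivAt {n : ℕ} {f : (Fin n → ℝ) → ℝ} (k : Fin n) {x : Fin n → ℝ}
    (hx : x ∉ tsupport f) :
    HasDerivAt (fun t => f (Function.update x k t)) 0 (x k) :=
  (hasDerivAt_const (x k) (0:ℝ)).congr_of_eventuallyEq (sec_ev_zero k hx)

lemma aux1d (f f' : ℝ → ℝ) (hd : ∀ t, HasDerivAt f (f' t) t)
    (hf : HasCompactSupport f) (hi : Integrable f') : ∫ t, f' t = 0 := by
  obtain ⟨R, hR⟩ : ∃ R : ℝ, tsupport f ⊆ Set.Icc (-R) R := by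
    obtain ⟨r, hr⟩ := hf.isBounded.subset_closedBall 0
    exact ⟨r, by simpa [Real.closedBall_eq_Icc] using hr⟩
  have hzero : ∀ t, t ∉ tsupport f → f' t = 0 := by
    intro t ht
    have hev : f =ᶠ[𝓝 t] fun _ => (0:ℝ) :=
      ((isClosed_tsupport f).isOpen_compl.eventually_mem ht).mono
        fun s hs => image_eq_zero_of_notMem_tsupport hs
    exact (hd t).unique ((hasDerivAt_const t (0:ℝ)).congr_of_eventuallyEq hev)
  have hRR : -(|R|+1) ≤ |R| + 1 := by
    have := abs_nonneg R; linarith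
  have hsub : tsupport f ⊆ Set.Ioc (-(|R|+1)) (|R|+1) := by
    refine hR.trans ?_
    intro t ht
    rcases ht with ⟨h1, h2⟩
    constructor
    · have : -|R| ≤ t := le_trans (neg_le_neg (le_abs_self R)) h1
      linarith
    · exact le_trans h2 (by linarith [le_abs_self R])
  have h1 : ∫ t, f' t = ∫ t in Set.Ioc (-(|R|+1)) (|R|+1), f' t := by
    refine (setIntegral_eq_integral_of_forall_compl_eq_zero ?_).symm
    intro t ht
    exact hzero t fun hts => ht (hsub hts)
  have h2 : ∫ t in Set.Ioc (-(|R|+1)) (|R|+1), f' t = ∫ t in (-(|R|+1))..(|R|+1), f' t :=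
    (intervalIntegral.integral_of_le hRR).symm
  have h3 : ∫ t in (-(|R|+1))..(|R|+1), f' t = f (|R|+1) - f (-(|R|+1)) :=
    intervalIntegral.integral_eq_sub_of_hasDerivAt (fun t _ => hd t)
      hi.intervalIntegrable
  have hfb : f (|R|+1) = 0 := by
    apply image_eq_zero_of_notMem_tsupport
    intro hmem
    have := (hR hmem).2
    linarith [le_abs_self R]
  have hfa : f (-(|R|+1)) = 0 := by
    apply image_eq_zero_of_notMem_tsupport
    intro hmem
    have := (hR hmem).1
    have : -|R| ≤ -(|R|+1) := le_trans (neg_le_neg (le_abs_self R)) this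
    linarith
  rw [h1, h2, h3, hfb, hfa, sub_zero]

lemma key_zero {m : ℕ} (k : Fin (m + 1)) (G g' w : (Fin (m + 1) → ℝ) → ℝ)
    (hG : HasCompactSupport G)
    (hd : ∀ x, HasDerivAt (fun t => G (Function.update x k t)) (g' x) (x k))
    (hw : ∀ (x : Fin (m + 1) → ℝ) (t : ℝ), w (Function.update x k t) = w x)
    (hc : Continuous (fun x => g' x * w x)) :
    ∫ x, g' x * w x = 0 := by
  have hg'0 : ∀ x, x ∉ tsupport G → g' x = 0 := fun x hx =>
    (hd x).unique (sec_loc_zero_hasDerivAt k hx)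
  obtain ⟨R, hR⟩ : ∃ R : ℝ, tsupport G ⊆ Metric.closedBall 0 R :=
    hG.isBounded.subset_closedBall 0
  set h : (Fin (m + 1) → ℝ) → ℝ := fun x => g' x * w x with hh
  have hh0 : ∀ x, x ∉ tsupport G → h x = 0 := by
    intro x hx; rw [hh]; simp only []; rw [hg'0 x hx, zero_mul]
  have hs : HasCompactSupport h := HasCompactSupport.intro hG hh0
  have hint : Integrable h := hc.integrable_of_hasCompactSupport hs
  set e := MeasurableEquiv.piFinSuccAbove (fun _ : Fin (m + 1) => ℝ) k with he
  have hmp := measurePreserving_piFinSuccAbove (fun _ : Fin (m + 1) => (volume : Measure ℝ)) k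
  have hes : ∀ (a : ℝ) (y : Fin m → ℝ), e.symm (a, y) = k.insertNth (α := fun _ => ℝ) a y := fun a y => rfl
  set ν : Measure (Fin m → ℝ) := Measure.pi (fun _ => volume) with hν
  have hsymm : MeasurePreserving e.symm ((volume : Measure ℝ).prod ν)
      (Measure.pi fun _ => volume) := MeasurePreserving.symm e hmp
  have hie := hsymm.integral_comp e.symm.measurableEmbedding h
  have hint' : Integrable (fun z : ℝ × (Fin m → ℝ) => h (e.symm z))
      ((volume : Measure ℝ).prod ν) := by
    refine (hsymm.integrable_comp_emb e.symm.measurableEmbedding (g := h)).2 ?_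
    rw [← volume_pi]
    exact hint
  -- inner integrals vanish
  have inner : ∀ y : Fin m → ℝ, (∫ a : ℝ, h (e.symm (a, y))) = 0 := by
    intro y
    have hupd : ∀ (t s : ℝ), Function.update (k.insertNth (α := fun _ => ℝ) t y) k s
        = k.insertNth (α := fun _ => ℝ) s y :=
      fun t s => Fin.update_insertNth (α := fun _ => ℝ) k t s y
    have hins_k : ∀ t : ℝ, (k.insertNth (α := fun _ => ℝ) t y) k = t :=
      fun t => Fin.insertNth_apply_same (α := fun _ => ℝ) k t y
    have hwc : ∀ t : ℝ, w (k.insertNth (α := fun _ => ℝ) t y) = w (k.insertNth (α := fun _ => ℝ) 0 y) := by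
      intro t
      have h1 := hw (k.insertNth (α := fun _ => ℝ) 0 y) t
      rwa [hupd 0 t] at h1
    have hnormbd : ∀ t : ℝ, k.insertNth (α := fun _ => ℝ) t y ∈ tsupport G → |t| ≤ R := by
      intro t ht
      have h1 : ‖k.insertNth (α := fun _ => ℝ) t y‖ ≤ R := by
        have := hR ht
        simpa [Metric.mem_closedBall] using this
      have h2 : |t| ≤ ‖k.insertNth (α := fun _ => ℝ) t y‖ := by
        have := norm_le_pi_norm (k.insertNth (α := fun _ => ℝ) t y) k
        rwa [hins_k, Real.norm_eq_abs] at this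
      linarith
    have hcins : Continuous (fun t : ℝ => k.insertNth (α := fun _ => ℝ) t y) := by
      have heq : (fun t : ℝ => k.insertNth (α := fun _ => ℝ) t y)
          = fun t : ℝ => Function.update (k.insertNth (α := fun _ => ℝ) 0 y) k t := by
        funext t; rw [hupd 0 t]
      rw [heq]
      exact continuous_const.update k continuous_id
    refine aux1d (fun t => G (k.insertNth (α := fun _ => ℝ) t y) * w (k.insertNth (α := fun _ => ℝ) 0 y)) _ ?_ ?_ ?_
    · intro t
      have h1 := hd (k.insertNth (α := fun _ => ℝ) t y)
      rw [hins_k] at h1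
      simp only [hupd] at h1
      have h2 := h1.mul_const (w (k.insertNth (α := fun _ => ℝ) 0 y))
      have h3 : h (e.symm (t, y)) = g' (k.insertNth (α := fun _ => ℝ) t y) * w (k.insertNth (α := fun _ => ℝ) 0 y) := by
        rw [hes, hh]
        simp only []
        rw [hwc]
      rw [h3]
      exact h2
    · apply HasCompactSupport.intro (isCompact_Icc (a := -R) (b := R))
      intro t ht
      have : k.insertNth (α := fun _ => ℝ) t y ∉ tsupport G := fun hmem => ht (abs_le.1 (hnormbd t hmem))
      rw [image_eq_zero_of_notMem_tsupport this, zero_mul]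
    · apply Continuous.integrable_of_hasCompactSupport
      · have : (fun t : ℝ => h (e.symm (t, y))) = fun t => h (k.insertNth (α := fun _ => ℝ) t y) := by
          funext t; rw [hes]
        rw [this]
        exact hc.comp hcins
      · apply HasCompactSupport.intro (isCompact_Icc (a := -R) (b := R))
        intro t ht
        have hmem : k.insertNth (α := fun _ => ℝ) t y ∉ tsupport G := fun hmem => ht (abs_le.1 (hnormbd t hmem))
        rw [hes]
        exact hh0 _ hmem
  calc ∫ x, h x = ∫ x, h x ∂(Measure.pi fun _ => volume) := by rw [← volume_pi]
    _ = ∫ z : ℝ × (Fin m → ℝ), h (e.symm z) ∂((volume : Measure ℝ).prod ν) := hie.symm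
    _ = ∫ a : ℝ, (∫ y, h (e.symm (a, y)) ∂ν) := integral_prod _ hint'
    _ = ∫ y, (∫ a : ℝ, h (e.symm (a, y))) ∂ν := integral_integral_swap hint'
    _ = ∫ y, (0:ℝ) ∂ν := by
        apply integral_congr_ae
        exact Filter.Eventually.of_forall fun y => inner y
    _ = 0 := integral_zero _ _

lemma pd_continuousOn {n : ℕ} {f : (Fin n → ℝ) → ℝ} {Ω : Set (Fin n → ℝ)}
    (hΩ : IsOpen Ω) (hf : ContDiffOn ℝ 1 f Ω) (k : Fin n) :
    ContinuousOn (fun x => deriv (fun t => f (Function.update x k t)) (x k)) Ω := by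
  have hdiff : ∀ x ∈ Ω, DifferentiableAt ℝ f x := fun x hx =>
    (hf.contDiffAt (hΩ.mem_nhds hx)).differentiableAt one_ne_zero
  have heq : Set.EqOn (fun x => fderiv ℝ f x (Pi.single k 1))
      (fun x => deriv (fun t => f (Function.update x k t)) (x k)) Ω := by
    intro x hx
    exact ((sec_hasDerivAt k (hdiff x hx)).deriv).symm
  refine ContinuousOn.congr ?_ heq.symm
  exact (hf.continuousOn_fderiv_of_isOpen hΩ le_rfl).clm_apply continuousOn_const

lemma integrableOn_of_supp {n : ℕ} {f : (Fin n → ℝ) → ℝ} {Ω : Set (Fin n → ℝ)}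
    {K : Set (Fin n → ℝ)} (hΩ : IsOpen Ω) (hK : IsCompact K) (hKΩ : K ⊆ Ω)
    (hf : ContinuousOn f Ω) (h0 : ∀ x ∈ Ω, x ∉ K → f x = 0) :
    IntegrableOn f Ω := by
  have h1 : IntegrableOn f K := (hf.mono hKΩ).integrableOn_compact hK
  have h2 : IntegrableOn f (Ω \ K) := by
    have hmeas : MeasurableSet (Ω \ K) := hΩ.measurableSet.diff hK.measurableSet
    refine Integrable.congr (integrable_zero _ _ _) ?_
    refine (MeasureTheory.ae_restrict_iff' hmeas).2 ?_
    exact Filter.Eventually.of_forall fun x hx => (h0 x hx.1 hx.2).symm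
  exact (h1.union h2).mono_set fun x hx => by
    by_cases hxK : x ∈ K
    · exact Or.inl hxK
    · exact Or.inr ⟨hx, hxK⟩


lemma young_core {p : ℝ} (hp : 1 < p) {a b : ℝ} (ha : 0 ≤ a) (hb : 0 ≤ b) :
    p * a ^ (p - 1) * b ≤ (p - 1) * a ^ p + b ^ p := by
  have hp0 : 0 < p := lt_trans one_pos hp
  have hp1 : 0 < p - 1 := sub_pos.2 hp
  have hq : Real.HolderConjugate (p / (p - 1)) p :=
    (Real.HolderConjugate.conjExponent hp).symm
  have h := Real.young_inequality_of_nonneg (Real.rpow_nonneg ha (p-1)) hb hq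
  have ha1 : (a ^ (p - 1)) ^ (p / (p - 1)) = a ^ p := by
    rw [← Real.rpow_mul ha]
    congr 1
    field_simp
  rw [ha1] at h
  calc p * a ^ (p-1) * b = p * (a ^ (p-1) * b) := by ring
    _ ≤ p * (a ^ p / (p / (p-1)) + b ^ p / p) := mul_le_mul_of_nonneg_left h hp0.le
    _ = (p - 1) * a ^ p + b ^ p := by
        field_simp

lemma young_pt {p : ℝ} (hp : 1 < p) {Wx Hx Lx ux vx du dv df : ℝ}
    (hW : 0 ≤ Wx) (hH : 0 ≤ Hx) (hu : 0 ≤ ux) (hv : 0 < vx)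
    (hdf : df ≤ -(Lx * Hx * vx ^ (p - 1))) :
    df * (ux ^ p * vx ^ (1 - p))
      + (Wx * |dv| ^ (p - 2) * dv) *
        (p * ux ^ (p - 1) * du * vx ^ (1 - p) + (1 - p) * ux ^ p * vx ^ (-p) * dv)
      ≤ Wx * |du| ^ p - Lx * Hx * ux ^ p := by
  have hp0 : (0:ℝ) < p := lt_trans one_pos hp
  have hvp : vx ^ (p - 1) * vx ^ (1 - p) = 1 := by
    rw [← Real.rpow_add hv]
    norm_num
  -- step 1
  have s1 : df * (ux ^ p * vx ^ (1 - p)) ≤ -(Lx * Hx * ux ^ p) := by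
    have hnn : 0 ≤ ux ^ p * vx ^ (1 - p) :=
      mul_nonneg (Real.rpow_nonneg hu p) (Real.rpow_nonneg hv.le _)
    calc df * (ux ^ p * vx ^ (1 - p))
        ≤ -(Lx * Hx * vx ^ (p - 1)) * (ux ^ p * vx ^ (1 - p)) :=
          mul_le_mul_of_nonneg_right hdf hnn
      _ = -(Lx * Hx * ux ^ p) * (vx ^ (p - 1) * vx ^ (1 - p)) := by ring
      _ = -(Lx * Hx * ux ^ p) := by rw [hvp, mul_one]
  -- |dv| powers
  have habs2 : |dv| ^ (p - 2) * dv * dv = |dv| ^ p := by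
    rcases eq_or_ne dv 0 with rfl | h
    · rw [abs_zero, Real.zero_rpow (by linarith : p ≠ 0)]
      ring
    · have h0 : 0 < |dv| := abs_pos.2 h
      calc |dv| ^ (p - 2) * dv * dv = |dv| ^ (p - 2) * (|dv| * |dv|) := by
            rw [mul_assoc, abs_mul_abs_self]
        _ = |dv| ^ (p - 2) * (|dv| ^ (1:ℝ) * |dv| ^ (1:ℝ)) := by rw [Real.rpow_one]
        _ = |dv| ^ (p - 2 + 1 + 1) := by
            rw [Real.rpow_add h0, Real.rpow_add h0]; ring
        _ = |dv| ^ p := by congr 1; ring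
  have habs1 : |dv| ^ (p - 2) * |dv| = |dv| ^ (p - 1) := by
    rcases eq_or_ne dv 0 with rfl | h
    · rw [abs_zero, Real.zero_rpow (by linarith : p - 1 ≠ 0)]
      ring
    · have h0 : 0 < |dv| := abs_pos.2 h
      calc |dv| ^ (p - 2) * |dv| = |dv| ^ (p - 2) * |dv| ^ (1:ℝ) := by rw [Real.rpow_one]
        _ = |dv| ^ (p - 2 + 1) := by rw [Real.rpow_add h0]
        _ = |dv| ^ (p - 1) := by congr 1; ring
  -- step 2 (exact identity)
  have s2 : (Wx * |dv| ^ (p - 2) * dv) * ((1 - p) * ux ^ p * vx ^ (-p) * dv)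
      = -((p - 1) * (Wx * ux ^ p * vx ^ (-p) * |dv| ^ p)) := by
    calc (Wx * |dv| ^ (p - 2) * dv) * ((1 - p) * ux ^ p * vx ^ (-p) * dv)
        = (1 - p) * (Wx * ux ^ p * vx ^ (-p)) * (|dv| ^ (p - 2) * dv * dv) := by ring
      _ = -((p - 1) * (Wx * ux ^ p * vx ^ (-p) * |dv| ^ p)) := by rw [habs2]; ring
  -- rpow expansion of the product base
  have apow : ∀ c : ℝ, (ux * |dv| * vx⁻¹) ^ c = ux ^ c * |dv| ^ c * (vx ^ c)⁻¹ := by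
    intro c
    rw [Real.mul_rpow (mul_nonneg hu (abs_nonneg dv)) (inv_nonneg.2 hv.le),
      Real.mul_rpow hu (abs_nonneg dv), Real.inv_rpow hv.le]
  have hvinv : ∀ c : ℝ, vx ^ (-c) = (vx ^ c)⁻¹ := fun c => Real.rpow_neg hv.le c
  -- step 3
  have key : (|dv| ^ (p - 2) * dv) * du ≤ |dv| ^ (p - 1) * |du| := by
    calc (|dv| ^ (p - 2) * dv) * du ≤ |(|dv| ^ (p - 2) * dv) * du| := le_abs_self _
      _ = |dv| ^ (p - 2) * |dv| * |du| := by
          rw [abs_mul, abs_mul, abs_of_nonneg (Real.rpow_nonneg (abs_nonneg dv) _)]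
      _ = |dv| ^ (p - 1) * |du| := by rw [habs1]
  have s3 : (Wx * |dv| ^ (p - 2) * dv) * (p * ux ^ (p - 1) * du * vx ^ (1 - p))
      ≤ Wx * (p * (ux * |dv| * vx⁻¹) ^ (p - 1) * |du|) := by
    have hnn : 0 ≤ Wx * p * ux ^ (p - 1) * vx ^ (1 - p) := by
      have := Real.rpow_nonneg hu (p - 1)
      have := Real.rpow_nonneg hv.le (1 - p)
      positivity
    calc (Wx * |dv| ^ (p - 2) * dv) * (p * ux ^ (p - 1) * du * vx ^ (1 - p))
        = (Wx * p * ux ^ (p - 1) * vx ^ (1 - p)) * ((|dv| ^ (p - 2) * dv) * du) := by ring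
      _ ≤ (Wx * p * ux ^ (p - 1) * vx ^ (1 - p)) * (|dv| ^ (p - 1) * |du|) :=
          mul_le_mul_of_nonneg_left key hnn
      _ = Wx * (p * (ux * |dv| * vx⁻¹) ^ (p - 1) * |du|) := by
          rw [apow, show (1 - p : ℝ) = -(p - 1) by ring, hvinv]
          ring
  have hyoung : Wx * (p * (ux * |dv| * vx⁻¹) ^ (p - 1) * |du|)
      ≤ (p - 1) * (Wx * ux ^ p * vx ^ (-p) * |dv| ^ p) + Wx * |du| ^ p := by
    have hab : 0 ≤ ux * |dv| * vx⁻¹ :=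
      mul_nonneg (mul_nonneg hu (abs_nonneg dv)) (inv_nonneg.2 hv.le)
    have h := young_core hp hab (abs_nonneg du)
    have h2 := mul_le_mul_of_nonneg_left h hW
    have h3 : Wx * ((p - 1) * (ux * |dv| * vx⁻¹) ^ p + |du| ^ p)
        = (p - 1) * (Wx * ux ^ p * vx ^ (-p) * |dv| ^ p) + Wx * |du| ^ p := by
      rw [apow, hvinv]; ring
    linarith
  rw [mul_add]
  linarith [s1, s3, hyoung, s2.le, s2.ge]

/-- Anisotropic conformable Hardy type inequality with weights (compactly supported
case): if `v > 0` satisfies `−D^α_{x_k}(W_k |D^α_{x_k} v|^{p_k-2} D^α_{x_k} v)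
≥ L_k H_k v^{p_k-1}` for each `k`, then for every nonnegative `C¹` function `u`
with compact support in `Ω`,
`∑ₖ ∫_Ω W_k |D^α_{x_k} u|^{p_k} d_α x ≥ ∑ₖ L_k ∫_Ω H_k u^{p_k} d_α x`. -/
theorem anisotropic_conformable_hardy (α : ℝ) (hα : α ∈ Set.Ioc (0 : ℝ) 1)
    (n : ℕ) (Ω : Set (Fin n → ℝ)) (hΩ : IsOpen Ω)
    (hΩpos : Ω ⊆ {x : Fin n → ℝ | ∀ k, 0 < x k})
    (p : Fin n → ℝ) (hp : ∀ k, 1 < p k) (L : Fin n → ℝ)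
    (W H : Fin n → (Fin n → ℝ) → ℝ)
    (hWcont : ∀ k, ContinuousOn (W k) Ω) (hHcont : ∀ k, ContinuousOn (H k) Ω)
    (hW0 : ∀ k, ∀ x ∈ Ω, 0 ≤ W k x) (hH0 : ∀ k, ∀ x ∈ Ω, 0 ≤ H k x)
    (v : (Fin n → ℝ) → ℝ) (hv : ContDiffOn ℝ 1 v Ω) (hv0 : ∀ x ∈ Ω, 0 < v x)
    (hF : ∀ k, ContDiffOn ℝ 1
      (fun x => W k x * |confPDeriv α v k x| ^ (p k - 2) * confPDeriv α v k x) Ω)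
    (hineq : ∀ k, ∀ x ∈ Ω,
      -(confPDeriv α
          (fun y => W k y * |confPDeriv α v k y| ^ (p k - 2) * confPDeriv α v k y) k x)
        ≥ L k * H k x * v x ^ (p k - 1))
    (u : (Fin n → ℝ) → ℝ) (hu : ContDiffOn ℝ 1 u Ω) (hu0 : ∀ x ∈ Ω, 0 ≤ u x)
    (husupp : HasCompactSupport u) (husubset : tsupport u ⊆ Ω) :
    ∑ k, ∫ x in Ω, W k x * |confPDeriv α u k x| ^ (p k) * ∏ j, (x j) ^ (α - 1)
      ≥ ∑ k, L k * ∫ x in Ω, H k x * u x ^ (p k) * ∏ j, (x j) ^ (α - 1) := by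
  rw [ge_iff_le]
  apply Finset.sum_le_sum
  intro k _
  have hn0 : n ≠ 0 := by rintro rfl; exact k.elim0
  obtain ⟨m, rfl⟩ := Nat.exists_eq_succ_of_ne_zero hn0
  have hα0 : (0:ℝ) < α := hα.1
  have hp1 : 1 < p k := hp k
  have hpk0 : p k ≠ 0 := ne_of_gt (lt_trans one_pos hp1)
  have hpk1 : p k - 1 ≠ 0 := ne_of_gt (by linarith)
  set K := tsupport u with hKdef
  have hKc : IsCompact K := husupp
  have hKΩ : K ⊆ Ω := husubset
  have hxpos : ∀ x ∈ Ω, ∀ j, 0 < x j := fun x hx => hΩpos hx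
  -- differentiability of the data
  have hudiff : ∀ x ∈ Ω, DifferentiableAt ℝ u x := fun x hx =>
    (hu.contDiffAt (hΩ.mem_nhds hx)).differentiableAt one_ne_zero
  have hvdiff : ∀ x ∈ Ω, DifferentiableAt ℝ v x := fun x hx =>
    (hv.contDiffAt (hΩ.mem_nhds hx)).differentiableAt one_ne_zero
  set F : (Fin (m+1) → ℝ) → ℝ :=
    fun x => W k x * |confPDeriv α v k x| ^ (p k - 2) * confPDeriv α v k x with hFdef
  have hFcd : ContDiffOn ℝ 1 F Ω := hF k
  have hFdiff : ∀ x ∈ Ω, DifferentiableAt ℝ F x := fun x hx =>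
    (hFcd.contDiffAt (hΩ.mem_nhds hx)).differentiableAt one_ne_zero
  set Pd : ((Fin (m+1) → ℝ) → ℝ) → (Fin (m+1) → ℝ) → ℝ :=
    fun f x => deriv (fun t => f (Function.update x k t)) (x k) with hPdDef
  set wt : (Fin (m+1) → ℝ) → ℝ :=
    fun x => ∏ j ∈ Finset.univ.erase k, (x j) ^ (α - 1) with hwtdef
  set wf : (Fin (m+1) → ℝ) → ℝ := fun x => ∏ j, (x j) ^ (α - 1) with hwfdef
  set φ : (Fin (m+1) → ℝ) → ℝ :=
    fun x => F x * v x ^ (1 - p k) * u x ^ (p k) with hφdef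
  set G : (Fin (m+1) → ℝ) → ℝ := Set.indicator Ω φ with hGdef
  set g' : (Fin (m+1) → ℝ) → ℝ := Set.indicator Ω (fun x =>
      (Pd F x * v x ^ (1 - p k) + F x * ((1 - p k) * v x ^ (-(p k)) * Pd v x)) * u x ^ (p k)
      + (F x * v x ^ (1 - p k)) * (p k * u x ^ (p k - 1) * Pd u x)) with hg'def
  have huK : ∀ x, x ∉ K → u x = 0 := fun x hx => image_eq_zero_of_notMem_tsupport hx
  -- G vanishes off K
  have hGK : ∀ x, x ∉ K → G x = 0 := by
    intro x hx
    by_cases hxΩ : x ∈ Ω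
    · rw [hGdef, Set.indicator_of_mem hxΩ, hφdef]
      simp only []
      rw [huK x hx, Real.zero_rpow hpk0, mul_zero]
    · rw [hGdef, Set.indicator_of_notMem hxΩ]
  have hGsupp : HasCompactSupport G := HasCompactSupport.intro hKc hGK
  have htsG : tsupport G ⊆ K := by
    apply closure_minimal ?_ (isClosed_tsupport u)
    intro x hx
    by_contra h
    exact hx (hGK x h)
  -- g' vanishes off K
  have hg'K : ∀ x, x ∉ K → g' x = 0 := by
    intro x hx
    by_cases hxΩ : x ∈ Ω
    · rw [hg'def, Set.indicator_of_mem hxΩ]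
      have h1 : u x ^ (p k) = 0 := by rw [huK x hx]; exact Real.zero_rpow hpk0
      have h2 : u x ^ (p k - 1) = 0 := by rw [huK x hx]; exact Real.zero_rpow hpk1
      rw [h1, h2]; ring
    · rw [hg'def, Set.indicator_of_notMem hxΩ]
  -- the derivative property
  have hd : ∀ x, HasDerivAt (fun t => G (Function.update x k t)) (g' x) (x k) := by
    intro x
    by_cases hxΩ : x ∈ Ω
    · have hupdx : Function.update x k (x k) = x := Function.update_eq_self k x
      have hevΩ : ∀ᶠ t in 𝓝 (x k), Function.update x k t ∈ Ω := by
        have hcu : ContinuousAt (fun s => Function.update x k s) (x k) :=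
          (hasDerivAt_update x k (x k)).continuousAt
        have hmem : Ω ∈ 𝓝 (Function.update x k (x k)) := by
          rw [hupdx]; exact hΩ.mem_nhds hxΩ
        exact hcu.preimage_mem_nhds hmem
      have hev : (fun t => G (Function.update x k t))
          =ᶠ[𝓝 (x k)] (fun t => φ (Function.update x k t)) :=
        hevΩ.mono fun t ht => by rw [hGdef]; exact Set.indicator_of_mem ht φ
      have hSF := sec_hasDerivAt' k (hFdiff x hxΩ)
      have hSv := sec_hasDerivAt' k (hvdiff x hxΩ)
      have hSu := sec_hasDerivAt' k (hudiff x hxΩ)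
      have hSvp := hSv.rpow_const (p := 1 - p k)
        (Or.inl (by rw [hupdx]; exact (hv0 x hxΩ).ne'))
      have hSup := hSu.rpow_const (p := p k) (Or.inr hp1.le)
      have hprod := (hSF.mul hSvp).mul hSup
      simp only [hupdx] at hprod
      have hexp : 1 - p k - 1 = -(p k) := by ring
      rw [hexp] at hprod
      rw [hg'def, Set.indicator_of_mem hxΩ]
      have h2 := hprod.congr_of_eventuallyEq hev
      refine h2.congr_deriv ?_
      simp only [hPdDef, Pi.mul_apply, hupdx]
      ring
    · have hxts : x ∉ tsupport G := fun hmem => hxΩ (hKΩ (htsG hmem))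
      rw [hg'def, Set.indicator_of_notMem hxΩ]
      exact sec_loc_zero_hasDerivAt k hxts
  -- weight invariance
  have hwinv : ∀ (x : Fin (m+1) → ℝ) (t : ℝ), wt (Function.update x k t) = wt x := by
    intro x t
    rw [hwtdef]
    refine Finset.prod_congr rfl fun j hj => ?_
    rw [Function.update_of_ne (Finset.ne_of_mem_erase hj)]
  -- continuity facts
  have hfac : ∀ (c : ℝ) (j : Fin (m+1)),
      ContinuousOn (fun x : Fin (m+1) → ℝ => (x j) ^ c) Ω := by
    intro c j
    exact ((continuous_apply j).continuousOn).rpow_const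
      (fun x hx => Or.inl (hxpos x hx j).ne')
  have hwtc : ContinuousOn wt Ω := by
    rw [hwtdef]
    exact continuousOn_finset_prod _ fun j _ => hfac (α - 1) j
  have hwfc : ContinuousOn wf Ω := by
    rw [hwfdef]
    exact continuousOn_finset_prod _ fun j _ => hfac (α - 1) j
  have hvc : ContinuousOn v Ω := hv.continuousOn
  have huc : ContinuousOn u Ω := hu.continuousOn
  have hFc : ContinuousOn F Ω := hFcd.continuousOn
  have hPdF : ContinuousOn (Pd F) Ω := pd_continuousOn hΩ hFcd k
  have hPdv : ContinuousOn (Pd v) Ω := pd_continuousOn hΩ hv k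
  have hPdu : ContinuousOn (Pd u) Ω := pd_continuousOn hΩ hu k
  have hv1p : ContinuousOn (fun x => v x ^ (1 - p k)) Ω :=
    hvc.rpow_const (fun x hx => Or.inl (hv0 x hx).ne')
  have hvnp : ContinuousOn (fun x => v x ^ (-(p k))) Ω :=
    hvc.rpow_const (fun x hx => Or.inl (hv0 x hx).ne')
  have hup : ContinuousOn (fun x => u x ^ (p k)) Ω :=
    huc.rpow_const (fun x _ => Or.inr (by positivity))
  have hup1 : ContinuousOn (fun x => u x ^ (p k - 1)) Ω :=
    huc.rpow_const (fun x _ => Or.inr (by linarith))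
  have hcpdu : ContinuousOn (fun x => confPDeriv α u k x) Ω :=
    (hfac (1 - α) k).mul hPdu
  have hg'contOn : ContinuousOn (fun x => g' x * wt x) Ω := by
    refine ContinuousOn.mul ?_ hwtc
    have hbody : ContinuousOn (fun x =>
        (Pd F x * v x ^ (1 - p k) + F x * ((1 - p k) * v x ^ (-(p k)) * Pd v x)) * u x ^ (p k)
        + (F x * v x ^ (1 - p k)) * (p k * u x ^ (p k - 1) * Pd u x)) Ω := by
      exact (((hPdF.mul hv1p).add
        (hFc.mul ((continuousOn_const.mul hvnp).mul hPdv))).mul hup).add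
        ((hFc.mul hv1p).mul ((continuousOn_const.mul hup1).mul hPdu))
    refine ContinuousOn.congr hbody ?_
    intro x hx
    rw [hg'def, Set.indicator_of_mem hx]
  have hcg : Continuous (fun x => g' x * wt x) := by
    rw [continuous_iff_continuousAt]
    intro x
    by_cases hxΩ : x ∈ Ω
    · exact hg'contOn.continuousAt (hΩ.mem_nhds hxΩ)
    · have hxK : x ∉ K := fun h => hxΩ (hKΩ h)
      have hev : (fun x => g' x * wt x) =ᶠ[𝓝 x] (fun _ => (0:ℝ)) := by
        have hopen : IsOpen Kᶜ := (isClosed_tsupport u).isOpen_compl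
        refine (hopen.eventually_mem hxK).mono fun y hy => ?_
        show g' y * wt y = 0
        rw [hg'K y hy, zero_mul]
      exact continuousAt_const.congr hev.symm
  -- the vanishing integral
  have hzero : ∫ x in Ω, g' x * wt x = 0 := by
    have h1 : ∀ x, x ∉ Ω → g' x * wt x = 0 := fun x hx => by
      rw [hg'def, Set.indicator_of_notMem hx, zero_mul]
    rw [setIntegral_eq_integral_of_forall_compl_eq_zero h1]
    exact key_zero k G g' wt hGsupp hd hwinv hcg
  -- pointwise inequality on Ω
  have hpt : ∀ x ∈ Ω, L k * (H k x * u x ^ (p k) * wf x) + g' x * wt x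
      ≤ W k x * |confPDeriv α u k x| ^ (p k) * wf x := by
    intro x hx
    have hxk : 0 < x k := hxpos x hx k
    have hdf : confPDeriv α F k x ≤ -(L k * H k x * v x ^ (p k - 1)) := by
      have h2 : -(confPDeriv α F k x) ≥ L k * H k x * v x ^ (p k - 1) := hineq k x hx
      linarith
    have hy := young_pt (du := confPDeriv α u k x) (dv := confPDeriv α v k x) hp1 (hW0 k x hx) (hH0 k x hx)
      (hu0 x hx) (hv0 x hx) hdf
    have eF : confPDeriv α F k x = (x k) ^ (1 - α) * Pd F x := rfl
    have ev : confPDeriv α v k x = (x k) ^ (1 - α) * Pd v x := rfl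
    have eu : confPDeriv α u k x = (x k) ^ (1 - α) * Pd u x := rfl
    have eFx : F x = W k x * |confPDeriv α v k x| ^ (p k - 2) * confPDeriv α v k x := rfl
    have hiden : confPDeriv α F k x * (u x ^ (p k) * v x ^ (1 - p k))
        + (W k x * |confPDeriv α v k x| ^ (p k - 2) * confPDeriv α v k x) *
          (p k * u x ^ (p k - 1) * confPDeriv α u k x * v x ^ (1 - p k)
            + (1 - p k) * u x ^ (p k) * v x ^ (-(p k)) * confPDeriv α v k x)
        = (x k) ^ (1 - α) *
          ((Pd F x * v x ^ (1 - p k) + F x * ((1 - p k) * v x ^ (-(p k)) * Pd v x)) * u x ^ (p k)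
            + (F x * v x ^ (1 - p k)) * (p k * u x ^ (p k - 1) * Pd u x)) := by
      rw [← eFx, eF, eu, ev]
      ring
    rw [hiden] at hy
    have hcinv : (x k) ^ (1 - α) * (x k) ^ (α - 1) = 1 := by
      rw [← Real.rpow_add hxk]
      norm_num
    have hwtnn : 0 ≤ wt x := by
      rw [hwtdef]
      exact Finset.prod_nonneg fun j _ => Real.rpow_nonneg (hxpos x hx j).le _
    have hcinn : 0 ≤ (x k) ^ (α - 1) := Real.rpow_nonneg hxk.le _
    have hwtf : (x k) ^ (α - 1) * wt x = wf x :=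
      Finset.mul_prod_erase Finset.univ (fun j => x j ^ (α - 1)) (Finset.mem_univ k)
    set B := (Pd F x * v x ^ (1 - p k) + F x * ((1 - p k) * v x ^ (-(p k)) * Pd v x)) * u x ^ (p k)
      + (F x * v x ^ (1 - p k)) * (p k * u x ^ (p k - 1) * Pd u x) with hBdef
    have hkey : B * wt x ≤ (W k x * |confPDeriv α u k x| ^ (p k)
        - L k * H k x * u x ^ (p k)) * wf x := by
      calc B * wt x = ((x k) ^ (1 - α) * (x k) ^ (α - 1)) * (B * wt x) := by
            rw [hcinv, one_mul]
        _ = ((x k) ^ (1 - α) * B) * ((x k) ^ (α - 1) * wt x) := by ring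
        _ ≤ (W k x * |confPDeriv α u k x| ^ (p k) - L k * H k x * u x ^ (p k)) *
              ((x k) ^ (α - 1) * wt x) :=
            mul_le_mul_of_nonneg_right hy (mul_nonneg hcinn hwtnn)
        _ = (W k x * |confPDeriv α u k x| ^ (p k) - L k * H k x * u x ^ (p k)) * wf x := by
            rw [hwtf]
    have hg'x : g' x * wt x = B * wt x := by
      rw [hg'def, Set.indicator_of_mem hx]
    rw [hg'x]
    nlinarith [hkey]
  -- integrability
  have hA : IntegrableOn (fun x => W k x * |confPDeriv α u k x| ^ (p k) * wf x) Ω := by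
    apply integrableOn_of_supp hΩ hKc hKΩ
    · exact ((hWcont k).mul ((hcpdu.abs).rpow_const
        (fun x _ => Or.inr (by positivity)))).mul hwfc
    · intro x hx hxK
      have h1 : Pd u x = 0 := pd_zero k hxK
      have h2 : confPDeriv α u k x = (x k) ^ (1 - α) * Pd u x := rfl
      rw [h2, h1, mul_zero, abs_zero, Real.zero_rpow hpk0, mul_zero, zero_mul]
  have hB : IntegrableOn (fun x => H k x * u x ^ (p k) * wf x) Ω := by
    apply integrableOn_of_supp hΩ hKc hKΩ
    · exact ((hHcont k).mul hup).mul hwfc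
    · intro x hx hxK
      rw [huK x hxK, Real.zero_rpow hpk0, mul_zero, zero_mul]
  have hCsup : HasCompactSupport (fun x => g' x * wt x) :=
    HasCompactSupport.intro hKc fun x hx => by rw [hg'K x hx, zero_mul]
  have hC : IntegrableOn (fun x => g' x * wt x) Ω :=
    (hcg.integrable_of_hasCompactSupport hCsup).integrableOn
  have hintadd : ∫ x in Ω, (L k * (H k x * u x ^ (p k) * wf x) + g' x * wt x)
      = L k * ∫ x in Ω, H k x * u x ^ (p k) * wf x := by
    rw [integral_add (hB.const_mul (L k)) hC, hzero, add_zero, integral_const_mul]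
  calc L k * ∫ x in Ω, H k x * u x ^ (p k) * ∏ j, (x j) ^ (α - 1)
      = ∫ x in Ω, (L k * (H k x * u x ^ (p k) * wf x) + g' x * wt x) := hintadd.symm
    _ ≤ ∫ x in Ω, W k x * |confPDeriv α u k x| ^ (p k) * wf x :=
        setIntegral_mono_on ((hB.const_mul (L k)).add hC) hA hΩ.measurableSet hpt
    _ = ∫ x in Ω, W k x * |confPDeriv α u k x| ^ (p k) * ∏ j, (x j) ^ (α - 1) := rfl
end

section
/- Anisotropic conformable Hardy inequality with power weights: let α ∈ (0,1], let Ω ⊆ (0,∞)^n be open, let m ∈ ℝ and a ∈ ℝ with a > α, and let p_1,…,p_n satisfy 1 < p_k < a + m and p_k(1−α) ≥ a − α for each k. Then for every nonnegative continuously differentiable function u with compact support in Ω: ∑_{k=1}^n ∫_Ω x_k^m·|D^α_{x_k} u(x)|^{p_k} d_α x ≥ ∑_{k=1}^n ((m + a − p_k)/p_k)^{p_k} ∫_Ω u(x)^{p_k}·x_k^{m − α p_k} d_α x. -/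
open Filter Topology MeasureTheory

private lemma cont_rpow_mul {g : ℝ → ℝ} (hg : Continuous g) {δ : ℝ} (hδ : 0 < δ)
    (hgz : ∀ t < δ, g t = 0) (e : ℝ) : Continuous fun t : ℝ => t ^ e * g t := by
  rw [continuous_iff_continuousAt]
  intro t
  rcases lt_or_ge t δ with h | h
  · have hev : (fun t : ℝ => t ^ e * g t) =ᶠ[𝓝 t] fun _ => 0 := by
      filter_upwards [isOpen_Iio.eventually_mem h] with r hr
      simp [hgz r hr]
    exact continuousAt_const.congr hev.symm
  · exact (Real.continuousAt_rpow_const t e (Or.inl (lt_of_lt_of_le hδ h).ne')).mul hg.continuousAt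

private lemma hardy1d {p s δ M : ℝ} (hp : 1 < p) (hs : 0 < s) (hδ : 0 < δ)
    {v : ℝ → ℝ} (hv : ContDiff ℝ 1 v)
    (hsupp : Function.support v ⊆ Set.Icc δ M) (hv0 : ∀ t, 0 ≤ v t) :
    (s / p) ^ p * ∫ t : ℝ, v t ^ p * t ^ (s - 1) ≤
      ∫ t : ℝ, t ^ (s - 1 + p) * |deriv v t| ^ p := by
  have p0 : 0 < p := one_pos.trans hp
  have pne : p ≠ 0 := p0.ne'
  have p1ne : p - 1 ≠ 0 := sub_ne_zero.mpr hp.ne'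
  set q : ℝ := p / (p - 1) with hqdef
  have hpq : p.HolderConjugate q := Real.HolderConjugate.conjExponent hp
  have q0 : 0 < q := hpq.symm.pos
  have hvz : ∀ t, t ∉ Set.Icc δ M → v t = 0 := by
    intro t ht; by_contra h; exact ht (hsupp h)
  have hnot : ∀ t : ℝ, t < δ → t ∉ Set.Icc δ M := fun t ht hmem => absurd hmem.1 (not_le.mpr ht)
  have hvz' : ∀ t < δ, v t = 0 := fun t ht => hvz t (hnot t ht)
  have hdz : ∀ t, t ∉ Set.Icc δ M → deriv v t = 0 := by
    intro t ht
    have hev : v =ᶠ[𝓝 t] fun _ => 0 := by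
      filter_upwards [isClosed_Icc.isOpen_compl.eventually_mem ht] with r hr
      exact hvz r hr
    rw [hev.deriv_eq]; simp
  have hdz' : ∀ t < δ, deriv v t = 0 := fun t ht => hdz t (hnot t ht)
  have hvc : Continuous v := hv.continuous
  have hdc : Continuous (deriv v) := hv.continuous_deriv le_rfl
  have cJ : Continuous fun t : ℝ => t ^ (s - 1) * v t ^ p :=
    cont_rpow_mul (hvc.rpow_const fun t => Or.inr p0.le) hδ
      (fun t ht => by rw [hvz' t ht, Real.zero_rpow pne]) _
  have cI : Continuous fun t : ℝ => t ^ (s - 1 + p) * |deriv v t| ^ p :=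
    cont_rpow_mul (hdc.abs.rpow_const fun t => Or.inr p0.le) hδ
      (fun t ht => by rw [hdz' t ht, abs_zero, Real.zero_rpow pne]) _
  have cK : Continuous fun t : ℝ => t ^ s * (v t ^ (p - 1) * deriv v t) :=
    cont_rpow_mul ((hvc.rpow_const fun t => Or.inr (by linarith)).mul hdc) hδ
      (fun t ht => by simp only [Pi.mul_apply]; rw [hdz' t ht, mul_zero]) _
  have cKa : Continuous fun t : ℝ => t ^ s * (v t ^ (p - 1) * |deriv v t|) :=
    cont_rpow_mul ((hvc.rpow_const fun t => Or.inr (by linarith)).mul hdc.abs) hδ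
      (fun t ht => by simp only [Pi.mul_apply]; rw [hdz' t ht, abs_zero, mul_zero]) _
  have hint : ∀ {f : ℝ → ℝ}, Continuous f → (∀ t, t ∉ Set.Icc δ M → f t = 0) → Integrable f :=
    fun hf h0 => hf.integrable_of_hasCompactSupport (HasCompactSupport.intro isCompact_Icc h0)
  have hJint : Integrable fun t : ℝ => t ^ (s - 1) * v t ^ p :=
    hint cJ fun t ht => by rw [hvz t ht, Real.zero_rpow pne, mul_zero]
  have hIint : Integrable fun t : ℝ => t ^ (s - 1 + p) * |deriv v t| ^ p :=
    hint cI fun t ht => by rw [hdz t ht, abs_zero, Real.zero_rpow pne, mul_zero]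
  have hKint : Integrable fun t : ℝ => t ^ s * (v t ^ (p - 1) * deriv v t) :=
    hint cK fun t ht => by rw [hdz t ht, mul_zero, mul_zero]
  have hKaint : Integrable fun t : ℝ => t ^ s * (v t ^ (p - 1) * |deriv v t|) :=
    hint cKa fun t ht => by rw [hdz t ht, abs_zero, mul_zero, mul_zero]
  have hgoal : (fun t : ℝ => v t ^ p * t ^ (s - 1)) = fun t : ℝ => t ^ (s - 1) * v t ^ p :=
    funext fun t => mul_comm _ _
  rw [hgoal]
  set J : ℝ := ∫ t : ℝ, t ^ (s - 1) * v t ^ p with hJ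
  set I : ℝ := ∫ t : ℝ, t ^ (s - 1 + p) * |deriv v t| ^ p with hI
  set K : ℝ := ∫ t : ℝ, t ^ s * (v t ^ (p - 1) * deriv v t) with hK
  set c : ℝ := s / p with hc
  have c0 : 0 < c := by rw [hc]; positivity
  -- FTC part
  set b : ℝ := δ / 2 with hb
  have b0 : 0 < b := by rw [hb]; positivity
  have bδ : b < δ := by rw [hb]; linarith
  set w : ℝ → ℝ := fun t => t ^ s * v t ^ p with hw
  set E : ℝ → ℝ := fun t => s * t ^ (s - 1) * v t ^ p + t ^ s * (p * v t ^ (p - 1) * deriv v t)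
    with hE
  have hder : ∀ t ∈ Set.Ioi b, HasDerivAt w (E t) t := by
    intro t ht
    have t0 : (0 : ℝ) < t := b0.trans ht
    have h1 : HasDerivAt (fun t : ℝ => t ^ s) (s * t ^ (s - 1)) t :=
      Real.hasDerivAt_rpow_const (Or.inl t0.ne')
    have h2 : HasDerivAt (fun t : ℝ => v t ^ p) (p * v t ^ (p - 1) * deriv v t) t := by
      have h3 := (Real.hasDerivAt_rpow_const (x := v t) (p := p) (Or.inr hp.le)).comp t
        ((hv.differentiable one_ne_zero) t).hasDerivAt
      exact h3
    exact h1.mul h2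
  have hEz : ∀ t, t ∉ Set.Icc δ M → E t = 0 := fun t ht => by
    simp [hE, hvz t ht, hdz t ht, Real.zero_rpow pne, Real.zero_rpow p1ne]
  have cE : Continuous E := by
    have h1 : Continuous fun t : ℝ => t ^ (s - 1) * (s * v t ^ p) :=
      cont_rpow_mul (continuous_const.mul (hvc.rpow_const fun t => Or.inr p0.le)) hδ
        (fun t ht => by simp only [Pi.mul_apply]; rw [hvz' t ht, Real.zero_rpow pne, mul_zero]) _
    have h2 : Continuous fun t : ℝ => t ^ s * (p * v t ^ (p - 1) * deriv v t) :=
      cont_rpow_mul ((continuous_const.mul (hvc.rpow_const fun t => Or.inr (by linarith))).mul hdc)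
        hδ (fun t ht => by simp only [Pi.mul_apply]; rw [hdz' t ht, mul_zero]) _
    have hEeq : E = fun t => t ^ (s - 1) * (s * v t ^ p) + t ^ s * (p * v t ^ (p - 1) * deriv v t) := by
      funext t; rw [hE]; ring
    rw [hEeq]; exact h1.add h2
  have hEint : Integrable E := hint cE hEz
  have hwcont : ContinuousWithinAt w (Set.Ici b) b :=
    ((Real.continuousAt_rpow_const b s (Or.inl b0.ne')).mul
      (hvc.continuousAt.rpow_const (Or.inr p0.le))).continuousWithinAt
  have hwtop : Tendsto w atTop (𝓝 0) := by
    have hev : w =ᶠ[atTop] fun _ => 0 := by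
      filter_upwards [eventually_gt_atTop M] with t ht
      simp [hw, hvz t fun hmem => absurd hmem.2 (not_le.mpr ht), Real.zero_rpow pne]
    exact Tendsto.congr' hev.symm tendsto_const_nhds
  have hFTC : ∫ t in Set.Ioi b, E t = 0 - w b :=
    MeasureTheory.integral_Ioi_of_hasDerivAt_of_tendsto hwcont hder hEint.integrableOn hwtop
  have hwb : w b = 0 := by simp [hw, hvz' b bδ, Real.zero_rpow pne]
  have hIoiJ : ∫ t in Set.Ioi b, t ^ (s - 1) * v t ^ p = J := by
    rw [hJ]
    apply setIntegral_eq_integral_of_forall_compl_eq_zero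
    intro t ht
    have htb : t ≤ b := by simpa [Set.mem_Ioi, not_lt] using ht
    rw [hvz' t (lt_of_le_of_lt htb bδ), Real.zero_rpow pne, mul_zero]
  have hIoiK : ∫ t in Set.Ioi b, t ^ s * (v t ^ (p - 1) * deriv v t) = K := by
    rw [hK]
    apply setIntegral_eq_integral_of_forall_compl_eq_zero
    intro t ht
    have htb : t ≤ b := by simpa [Set.mem_Ioi, not_lt] using ht
    rw [hdz' t (lt_of_le_of_lt htb bδ), mul_zero, mul_zero]
  have hEJK : ∫ t in Set.Ioi b, E t = s * J + p * K := by
    have hEeq : E = fun t => s * (t ^ (s - 1) * v t ^ p) + p * (t ^ s * (v t ^ (p - 1) * deriv v t)) := by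
      funext t; rw [hE]; ring
    rw [hEeq, MeasureTheory.integral_add ((hJint.const_mul s).integrableOn)
      ((hKint.const_mul p).integrableOn), MeasureTheory.integral_const_mul,
      MeasureTheory.integral_const_mul, hIoiJ, hIoiK]
  have key : s * J + p * K = 0 := by rw [← hEJK, hFTC, hwb, sub_zero]
  -- Young's inequality pointwise
  have hinvq : 1 / q = (p - 1) / p := by rw [hqdef, one_div_div]
  have young : ∀ t : ℝ, t ^ s * (v t ^ (p - 1) * |deriv v t|) ≤
      c ^ (1 - p) * (t ^ (s - 1 + p) * |deriv v t| ^ p) / p + c * (t ^ (s - 1) * v t ^ p) / q := by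
    intro t
    rcases em (t ∈ Set.Icc δ M) with h | h
    · have t0 : (0 : ℝ) < t := lt_of_lt_of_le hδ h.1
      have hX0 : 0 ≤ c ^ (1 - p) * (t ^ (s - 1 + p) * |deriv v t| ^ p) :=
        mul_nonneg (Real.rpow_nonneg c0.le _)
          (mul_nonneg (Real.rpow_nonneg t0.le _) (Real.rpow_nonneg (abs_nonneg _) _))
      have hY0 : 0 ≤ c * (t ^ (s - 1) * v t ^ p) :=
        mul_nonneg c0.le (mul_nonneg (Real.rpow_nonneg t0.le _) (Real.rpow_nonneg (hv0 t) _))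
      have hyoung := Real.young_inequality_of_nonneg (Real.rpow_nonneg hX0 (1 / p))
        (Real.rpow_nonneg hY0 (1 / q)) hpq
      have hAp : ((c ^ (1 - p) * (t ^ (s - 1 + p) * |deriv v t| ^ p)) ^ (1 / p)) ^ p
          = c ^ (1 - p) * (t ^ (s - 1 + p) * |deriv v t| ^ p) := by
        rw [← Real.rpow_mul hX0, one_div_mul_cancel pne, Real.rpow_one]
      have hBq : ((c * (t ^ (s - 1) * v t ^ p)) ^ (1 / q)) ^ q = c * (t ^ (s - 1) * v t ^ p) := by
        rw [← Real.rpow_mul hY0, one_div_mul_cancel q0.ne', Real.rpow_one]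
      have hABeq : (c ^ (1 - p) * (t ^ (s - 1 + p) * |deriv v t| ^ p)) ^ (1 / p) *
          (c * (t ^ (s - 1) * v t ^ p)) ^ (1 / q) = t ^ s * (v t ^ (p - 1) * |deriv v t|) := by
        rw [Real.mul_rpow (Real.rpow_nonneg c0.le _)
            (mul_nonneg (Real.rpow_nonneg t0.le _) (Real.rpow_nonneg (abs_nonneg _) _)),
          Real.mul_rpow (Real.rpow_nonneg t0.le _) (Real.rpow_nonneg (abs_nonneg _) _),
          Real.mul_rpow c0.le (mul_nonneg (Real.rpow_nonneg t0.le _) (Real.rpow_nonneg (hv0 t) _)),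
          Real.mul_rpow (Real.rpow_nonneg t0.le _) (Real.rpow_nonneg (hv0 t) _),
          ← Real.rpow_mul c0.le, ← Real.rpow_mul t0.le, ← Real.rpow_mul (abs_nonneg _),
          ← Real.rpow_mul t0.le, ← Real.rpow_mul (hv0 t)]
        rw [mul_one_div_cancel pne, Real.rpow_one]
        have e3 : p * (1 / q) = p - 1 := by rw [hinvq]; field_simp
        rw [e3]
        have e1 : c ^ ((1 - p) * (1 / p)) * c ^ (1 / q) = 1 := by
          rw [← Real.rpow_add c0, hinvq, show (1 - p) * (1 / p) + (p - 1) / p = 0 by field_simp; ring]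
          exact Real.rpow_zero c
        have e2 : t ^ ((s - 1 + p) * (1 / p)) * t ^ ((s - 1) * (1 / q)) = t ^ s := by
          rw [← Real.rpow_add t0, hinvq]
          congr 1
          field_simp
          ring
        calc c ^ ((1 - p) * (1 / p)) * (t ^ ((s - 1 + p) * (1 / p)) * |deriv v t|) *
              (c ^ (1 / q) * (t ^ ((s - 1) * (1 / q)) * v t ^ (p - 1)))
            = (c ^ ((1 - p) * (1 / p)) * c ^ (1 / q)) *
              ((t ^ ((s - 1 + p) * (1 / p)) * t ^ ((s - 1) * (1 / q))) *
                (v t ^ (p - 1) * |deriv v t|)) := by ring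
          _ = t ^ s * (v t ^ (p - 1) * |deriv v t|) := by rw [e1, e2, one_mul]
      calc t ^ s * (v t ^ (p - 1) * |deriv v t|)
          = (c ^ (1 - p) * (t ^ (s - 1 + p) * |deriv v t| ^ p)) ^ (1 / p) *
            (c * (t ^ (s - 1) * v t ^ p)) ^ (1 / q) := hABeq.symm
        _ ≤ ((c ^ (1 - p) * (t ^ (s - 1 + p) * |deriv v t| ^ p)) ^ (1 / p)) ^ p / p +
            ((c * (t ^ (s - 1) * v t ^ p)) ^ (1 / q)) ^ q / q := hyoung
        _ = c ^ (1 - p) * (t ^ (s - 1 + p) * |deriv v t| ^ p) / p +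
            c * (t ^ (s - 1) * v t ^ p) / q := by rw [hAp, hBq]
    · have h1 := hvz t h
      have h2 := hdz t h
      rw [h1, h2]
      simp [Real.zero_rpow p1ne, Real.zero_rpow pne]
  have hsum_int : Integrable fun t : ℝ =>
      c ^ (1 - p) * (t ^ (s - 1 + p) * |deriv v t| ^ p) / p + c * (t ^ (s - 1) * v t ^ p) / q :=
    ((hIint.const_mul _).div_const _).add ((hJint.const_mul _).div_const _)
  have hKabs : s * J ≤ p * ∫ t : ℝ, t ^ s * (v t ^ (p - 1) * |deriv v t|) := by
    have h1 : s * J = p * (-K) := by linarith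
    have h2 : -K ≤ |K| := neg_le_abs K
    have h3 : |K| ≤ ∫ t : ℝ, |t ^ s * (v t ^ (p - 1) * deriv v t)| := by
      rw [hK]
      simpa only [Real.norm_eq_abs] using
        MeasureTheory.norm_integral_le_integral_norm (fun t : ℝ => t ^ s * (v t ^ (p - 1) * deriv v t))
    have h4 : (∫ t : ℝ, |t ^ s * (v t ^ (p - 1) * deriv v t)|)
        = ∫ t : ℝ, t ^ s * (v t ^ (p - 1) * |deriv v t|) := by
      congr 1; funext t
      rcases em (t ∈ Set.Icc δ M) with h | h
      · have t0 : (0 : ℝ) ≤ t := (hδ.trans_le h.1).le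
        rw [abs_mul, abs_mul, abs_of_nonneg (Real.rpow_nonneg t0 _),
          abs_of_nonneg (Real.rpow_nonneg (hv0 t) _)]
      · rw [hdz t h]; simp
    have h5 : p * (-K) ≤ p * ∫ t : ℝ, t ^ s * (v t ^ (p - 1) * |deriv v t|) :=
      mul_le_mul_of_nonneg_left ((h2.trans h3).trans_eq h4) p0.le
    linarith
  have hKa_le : (∫ t : ℝ, t ^ s * (v t ^ (p - 1) * |deriv v t|))
      ≤ c ^ (1 - p) / p * I + c / q * J := by
    have hmono := MeasureTheory.integral_mono hKaint hsum_int young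
    have heq : (∫ t : ℝ, (c ^ (1 - p) * (t ^ (s - 1 + p) * |deriv v t| ^ p) / p +
        c * (t ^ (s - 1) * v t ^ p) / q)) = c ^ (1 - p) / p * I + c / q * J := by
      rw [MeasureTheory.integral_add ((hIint.const_mul _).div_const _)
        ((hJint.const_mul _).div_const _), MeasureTheory.integral_div,
        MeasureTheory.integral_div, MeasureTheory.integral_const_mul,
        MeasureTheory.integral_const_mul, ← hI, ← hJ]
      ring
    exact hmono.trans_eq heq
  have e4 : p * (c / q) = s - c := by
    rw [hqdef, hc]; field_simp
  have e5 : p * (c ^ (1 - p) / p) = c ^ (1 - p) := by field_simp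
  have final1 : s * J ≤ c ^ (1 - p) * I + (s - c) * J := by
    have h6 := mul_le_mul_of_nonneg_left hKa_le p0.le
    have h7 : p * (c ^ (1 - p) / p * I + c / q * J) = c ^ (1 - p) * I + (s - c) * J := by
      have : p * (c ^ (1 - p) / p * I + c / q * J)
          = (p * (c ^ (1 - p) / p)) * I + (p * (c / q)) * J := by ring
      rw [this, e4, e5]
    linarith
  have hcJ : c * J ≤ c ^ (1 - p) * I := by linarith
  have h6 : c ^ p * J = c ^ (p - 1) * (c * J) := by
    rw [show c ^ (p - 1) * (c * J) = (c ^ (p - 1) * c ^ (1 : ℝ)) * J by rw [Real.rpow_one]; ring,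
      ← Real.rpow_add c0, show p - 1 + 1 = p by ring]
  have h7 := mul_le_mul_of_nonneg_left hcJ (Real.rpow_nonneg c0.le (p - 1))
  have h8 : c ^ (p - 1) * (c ^ (1 - p) * I) = I := by
    rw [← mul_assoc, ← Real.rpow_add c0, show p - 1 + (1 - p) = 0 by ring, Real.rpow_zero, one_mul]
  rw [h6]
  exact h7.trans_eq h8

/-- Anisotropic conformable Hardy inequality with power weights:
`∑ₖ ∫_Ω x_k^m |D^α_{x_k} u|^{p_k} d_α x
  ≥ ∑ₖ ((m+a-p_k)/p_k)^{p_k} ∫_Ω u^{p_k} x_k^{m-αp_k} d_α x`. -/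
theorem anisotropic_conformable_hardy_power_weight (α : ℝ)
    (hα : α ∈ Set.Ioc (0 : ℝ) 1)
    (n : ℕ) (Ω : Set (Fin n → ℝ)) (hΩ : IsOpen Ω)
    (hΩpos : Ω ⊆ {x : Fin n → ℝ | ∀ k, 0 < x k})
    (m a : ℝ) (ha : α < a)
    (p : Fin n → ℝ) (hp1 : ∀ k, 1 < p k) (hp2 : ∀ k, p k < a + m)
    (hp3 : ∀ k, p k * (1 - α) ≥ a - α)
    (u : (Fin n → ℝ) → ℝ) (hu : ContDiffOn ℝ 1 u Ω) (hu0 : ∀ x ∈ Ω, 0 ≤ u x)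
    (husupp : HasCompactSupport u) (husubset : tsupport u ⊆ Ω) :
    ∑ k, ∫ x in Ω, (x k) ^ m * |confPDeriv α u k x| ^ (p k) * ∏ j, (x j) ^ (α - 1)
      ≥ ∑ k, ((m + a - p k) / p k) ^ (p k)
          * ∫ x in Ω, u x ^ (p k) * (x k) ^ (m - α * p k) * ∏ j, (x j) ^ (α - 1) := by
  obtain ⟨hα0, hα1⟩ := hα
  rcases n with _ | n
  · simp
  rw [ge_iff_le]
  refine Finset.sum_le_sum fun k _ => ?_
  -- global facts about u
  have hK : tsupport u ⊆ {x | ∀ j, 0 < x j} := husubset.trans hΩpos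
  have hu' : ContDiff ℝ 1 u := by
    rw [contDiff_iff_contDiffAt]
    intro x
    by_cases hx : x ∈ Ω
    · exact hu.contDiffAt (hΩ.mem_nhds hx)
    · have hx' : x ∉ tsupport u := fun h => hx (husubset h)
      exact ContDiffAt.congr_of_eventuallyEq contDiffAt_const
        (notMem_tsupport_iff_eventuallyEq.mp hx')
  have hu0' : ∀ x, 0 ≤ u x := by
    intro x
    by_cases hx : x ∈ Ω
    · exact hu0 x hx
    · rw [image_eq_zero_of_notMem_tsupport fun h => hx (husubset h)]
  set pk := p k with hpk
  have hpk1 : 1 < pk := hp1 k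
  have pk0 : 0 < pk := one_pos.trans hpk1
  have pkne : pk ≠ 0 := pk0.ne'
  have hma : 0 < m + a - pk := by have := hp2 k; rw [← hpk] at this; linarith
  set s : ℝ := m + α - α * pk with hsdef
  have hsge : m + a - pk ≤ s := by
    have h3 := hp3 k
    rw [← hpk] at h3
    have hexp : pk * (1 - α) = pk - pk * α := by ring
    have hcomm : pk * α = α * pk := mul_comm _ _
    rw [hsdef]; linarith
  have hs0 : 0 < s := lt_of_lt_of_le hma hsge
  -- derivative along a coordinate line
  have hderiv_pt : ∀ x : Fin (n+1) → ℝ,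
      HasDerivAt (fun t => u (Function.update x k t)) (fderiv ℝ u x (Pi.single k 1)) (x k) := by
    intro x
    have hupd : ∀ t : ℝ, Function.update x k t
        = x + (t - x k) • (Pi.single k 1 : Fin (n+1) → ℝ) := by
      intro t; funext j
      rcases eq_or_ne j k with rfl | hj
      · simp
      · simp [Function.update_of_ne hj, Pi.single_eq_of_ne hj]
    have hline : HasDerivAt (fun t : ℝ => x + (t - x k) • (Pi.single k 1 : Fin (n+1) → ℝ))
        (Pi.single k 1) (x k) := by
      have h1 : HasDerivAt (fun t : ℝ => t - x k) 1 (x k) := (hasDerivAt_id _).sub_const _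
      simpa using (h1.smul_const (Pi.single k (1:ℝ))).const_add x
    have hgx : x + ((x k) - x k) • (Pi.single k 1 : Fin (n+1) → ℝ) = x := by simp
    have hF : HasFDerivAt u (fderiv ℝ u x)
        (x + ((x k) - x k) • (Pi.single k 1 : Fin (n+1) → ℝ)) := by
      rw [hgx]; exact ((hu'.differentiable one_ne_zero) x).hasFDerivAt
    have hcomp := hF.comp_hasDerivAt (x k) hline
    have hfun : (fun t => u (Function.update x k t))
        = fun t => u (x + (t - x k) • (Pi.single k 1 : Fin (n+1) → ℝ)) := by
      funext t; rw [hupd]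
    rw [hfun]
    exact hcomp
  have hconf_eq : ∀ x : Fin (n+1) → ℝ,
      confPDeriv α u k x = (x k) ^ (1 - α) * fderiv ℝ u x (Pi.single k 1) := by
    intro x
    simp only [confPDeriv, (hderiv_pt x).deriv]
  -- the two integrands
  set F : (Fin (n+1) → ℝ) → ℝ :=
    fun x => x k ^ m * |confPDeriv α u k x| ^ pk * ∏ j, x j ^ (α - 1) with hFdef
  set G : (Fin (n+1) → ℝ) → ℝ :=
    fun x => u x ^ pk * x k ^ (m - α * pk) * ∏ j, x j ^ (α - 1) with hGdef
  have hFz : ∀ x, x ∉ tsupport u → F x = 0 := by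
    intro x hx
    have hd : confPDeriv α u k x = 0 := by
      rw [hconf_eq x, fderiv_of_notMem_tsupport ℝ hx]
      simp
    simp only [hFdef, hd, abs_zero, Real.zero_rpow pkne, mul_zero, zero_mul]
  have hGz : ∀ x, x ∉ tsupport u → G x = 0 := by
    intro x hx
    simp only [hGdef, image_eq_zero_of_notMem_tsupport hx, Real.zero_rpow pkne, zero_mul]
  -- continuity of F and G
  have hconf_cont : Continuous fun x : Fin (n+1) → ℝ => fderiv ℝ u x (Pi.single k 1) :=
    (hu'.continuous_fderiv one_ne_zero).clm_apply continuous_const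
  have happ : ∀ j : Fin (n+1), Continuous fun y : Fin (n+1) → ℝ => y j :=
    fun j => continuous_apply j
  have hFcont : Continuous F := by
    rw [continuous_iff_continuousAt]
    intro x
    by_cases hx : x ∈ tsupport u
    · have hxpos : ∀ j, 0 < x j := hK hx
      have h1 : ContinuousAt (fun y : Fin (n+1) → ℝ => y k ^ m) x :=
        ((happ k).continuousAt).rpow_const (Or.inl (hxpos k).ne')
      have hc : ContinuousAt (fun y => confPDeriv α u k y) x := by
        have heq : (fun y => confPDeriv α u k y)
            = fun y : Fin (n+1) → ℝ => y k ^ (1 - α) * fderiv ℝ u y (Pi.single k 1) :=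
          funext hconf_eq
        rw [heq]
        exact (((happ k).continuousAt).rpow_const (Or.inl (hxpos k).ne')).mul
          hconf_cont.continuousAt
      have h2 : ContinuousAt (fun y => |confPDeriv α u k y| ^ pk) x :=
        hc.abs.rpow_const (Or.inr pk0.le)
      have h3 : ContinuousAt (fun y : Fin (n+1) → ℝ => ∏ j, y j ^ (α - 1)) x :=
        tendsto_finset_prod _ fun j _ =>
          ((happ j).continuousAt).rpow_const (Or.inl (hxpos j).ne')
      exact (h1.mul h2).mul h3
    · have hev : F =ᶠ[𝓝 x] fun _ => 0 := by
        filter_upwards [(isClosed_tsupport u).isOpen_compl.eventually_mem hx] with z hz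
        exact hFz z hz
      exact continuousAt_const.congr hev.symm
  have hGcont : Continuous G := by
    rw [continuous_iff_continuousAt]
    intro x
    by_cases hx : x ∈ tsupport u
    · have hxpos : ∀ j, 0 < x j := hK hx
      have h1 : ContinuousAt (fun y : Fin (n+1) → ℝ => u y ^ pk) x :=
        (hu'.continuous.continuousAt).rpow_const (Or.inr pk0.le)
      have h2 : ContinuousAt (fun y : Fin (n+1) → ℝ => y k ^ (m - α * pk)) x :=
        ((happ k).continuousAt).rpow_const (Or.inl (hxpos k).ne')
      have h3 : ContinuousAt (fun y : Fin (n+1) → ℝ => ∏ j, y j ^ (α - 1)) x :=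
        tendsto_finset_prod _ fun j _ =>
          ((happ j).continuousAt).rpow_const (Or.inl (hxpos j).ne')
      exact (h1.mul h2).mul h3
    · have hev : G =ᶠ[𝓝 x] fun _ => 0 := by
        filter_upwards [(isClosed_tsupport u).isOpen_compl.eventually_mem hx] with z hz
        exact hGz z hz
      exact continuousAt_const.congr hev.symm
  have hFint : Integrable F := hFcont.integrable_of_hasCompactSupport
    (HasCompactSupport.intro husupp hFz)
  have hGint : Integrable G := hGcont.integrable_of_hasCompactSupport
    (HasCompactSupport.intro husupp hGz)
  have hΩF : ∫ x in Ω, F x = ∫ x, F x :=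
    setIntegral_eq_integral_of_forall_compl_eq_zero fun x hx =>
      hFz x fun h => hx (husubset h)
  have hΩG : ∫ x in Ω, G x = ∫ x, G x :=
    setIntegral_eq_integral_of_forall_compl_eq_zero fun x hx =>
      hGz x fun h => hx (husubset h)
  -- trivial case: u identically zero
  rcases eq_or_ne (tsupport u) ∅ with hKe | hKne
  · have hF0 : ∫ x in Ω, F x = 0 := by
      rw [show F = fun _ => 0 from funext fun x => hFz x (by simp [hKe])]
      simp
    have hG0 : ∫ x in Ω, G x = 0 := by
      rw [show G = fun _ => 0 from funext fun x => hGz x (by simp [hKe])]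
      simp
    rw [hF0, hG0, mul_zero]
  -- nontrivial case
  have hne : (tsupport u).Nonempty := Set.nonempty_iff_ne_empty.mpr hKne
  obtain ⟨z₁, hz₁, hz₁min⟩ :=
    IsCompact.exists_isMinOn husupp hne (continuous_apply k).continuousOn
  obtain ⟨z₂, hz₂, hz₂max⟩ :=
    IsCompact.exists_isMaxOn husupp hne (continuous_apply k).continuousOn
  set δk : ℝ := z₁ k with hδkdef
  set Mk : ℝ := z₂ k with hMkdef
  have hδk0 : 0 < δk := (hK hz₁) k
  -- Fubini infrastructure
  set e : (Fin (n+1) → ℝ) ≃ᵐ ℝ × (Fin n → ℝ) :=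
    MeasurableEquiv.piFinSuccAbove (fun _ => ℝ) k with he
  have hMP : MeasurePreserving e volume volume :=
    MeasureTheory.volume_preserving_piFinSuccAbove (fun _ => ℝ) k
  have hprodInt : ∀ {f : (Fin (n+1) → ℝ) → ℝ}, Integrable f volume →
      Integrable (fun z : ℝ × (Fin n → ℝ) => f (e.symm z))
        ((volume : Measure ℝ).prod volume) := by
    intro f hf
    have h : Integrable (f ∘ e.symm) volume :=
      (MeasurePreserving.integrable_comp_emb (hMP.symm e) e.symm.measurableEmbedding).mpr hf
    rwa [MeasureTheory.Measure.volume_eq_prod] at h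
  have hFub : ∀ {f : (Fin (n+1) → ℝ) → ℝ}, Integrable f volume →
      ∫ x, f x = ∫ y : Fin n → ℝ, ∫ t : ℝ, f (Fin.insertNth k t y) := by
    intro f hf
    calc ∫ x, f x = ∫ z : ℝ × (Fin n → ℝ), f (e.symm z) :=
          ((hMP.symm e).integral_comp e.symm.measurableEmbedding f).symm
      _ = ∫ t : ℝ, ∫ y : Fin n → ℝ, f (e.symm (t, y)) := by
          rw [MeasureTheory.Measure.volume_eq_prod]
          exact MeasureTheory.integral_prod _ (hprodInt hf)
      _ = ∫ y : Fin n → ℝ, ∫ t : ℝ, f (e.symm (t, y)) :=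
          MeasureTheory.integral_integral_swap (hprodInt hf)
      _ = ∫ y : Fin n → ℝ, ∫ t : ℝ, f (Fin.insertNth k t y) := rfl
  have hslice : ∀ {f : (Fin (n+1) → ℝ) → ℝ}, Integrable f volume →
      Integrable (fun y : Fin n → ℝ => ∫ t : ℝ, f (Fin.insertNth k t y)) volume := by
    intro f hf
    exact (hprodInt hf).integral_prod_right
  -- the slice inequality
  have hy : ∀ y : Fin n → ℝ,
      ((m + a - pk) / pk) ^ pk * ∫ t : ℝ, G (Fin.insertNth k t y)
        ≤ ∫ t : ℝ, F (Fin.insertNth k t y) := by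
    intro y
    by_cases hpos : ∀ j, 0 < y j
    · -- main case
      set v : ℝ → ℝ := fun t => u (Fin.insertNth k t y) with hvdef
      have hins_k : ∀ t : ℝ, (Fin.insertNth k t y : Fin (n+1) → ℝ) k = t :=
        fun t => Fin.insertNth_apply_same (α := fun _ => ℝ) k t y
      set W : ℝ := ∏ j : Fin n, y j ^ (α - 1) with hWdef
      have hW0 : 0 ≤ W := Finset.prod_nonneg fun j _ => Real.rpow_nonneg (hpos j).le _
      have hprod : ∀ t : ℝ,
          (∏ j, (Fin.insertNth k t y : Fin (n+1) → ℝ) j ^ (α - 1)) = t ^ (α - 1) * W := by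
        intro t
        rw [Fin.prod_univ_succAbove
          (fun j => (Fin.insertNth k t y : Fin (n+1) → ℝ) j ^ (α - 1)) k, hins_k]
        congr 1
        exact Finset.prod_congr rfl fun j _ => by rw [Fin.insertNth_apply_succAbove]
      have hvC : ContDiff ℝ 1 v := by
        have hl : ContDiff ℝ 1 (fun t : ℝ => (Fin.insertNth k t y : Fin (n+1) → ℝ)) := by
          have h : (fun t : ℝ => (Fin.insertNth k t y : Fin (n+1) → ℝ))
              = fun t => Fin.insertNth k 0 y + t • (Pi.single k 1 : Fin (n+1) → ℝ) := by
            funext t i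
            cases i using k.succAboveCases <;>
              simp [Fin.insertNth_apply_same, Fin.insertNth_apply_succAbove,
                Pi.single_eq_of_ne (Fin.succAbove_ne k _)]
          rw [h]
          exact contDiff_const.add (contDiff_id.smul contDiff_const)
        exact hu'.comp hl
      have hv0' : ∀ t, 0 ≤ v t := fun t => hu0' _
      have hvsupp : Function.support v ⊆ Set.Icc δk Mk := by
        intro t ht
        have hmem : (Fin.insertNth k t y : Fin (n+1) → ℝ) ∈ tsupport u :=
          subset_closure ht
        constructor
        · have := isMinOn_iff.mp hz₁min _ hmem
          rwa [hins_k] at this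
        · have := isMaxOn_iff.mp hz₂max _ hmem
          rwa [hins_k] at this
      have hvz2 : ∀ t, t ∉ Set.Icc δk Mk → v t = 0 := by
        intro t ht
        by_contra hcon
        exact ht (hvsupp hcon)
      have hdvz : ∀ t, t ∉ Set.Icc δk Mk → deriv v t = 0 := by
        intro t ht
        have hev : v =ᶠ[𝓝 t] fun _ => 0 := by
          filter_upwards [isClosed_Icc.isOpen_compl.eventually_mem ht] with r hr
          exact hvz2 r hr
        rw [hev.deriv_eq]; simp
      have hveq : ∀ t : ℝ,
          (fun r => u (Function.update (Fin.insertNth k t y : Fin (n+1) → ℝ) k r)) = v := by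
        intro t; funext r
        rw [Fin.update_insertNth (α := fun _ => ℝ)]
      have hconf_slice : ∀ t : ℝ,
          confPDeriv α u k (Fin.insertNth k t y) = t ^ (1 - α) * deriv v t := by
        intro t
        simp only [confPDeriv]
        rw [hveq t, hins_k t]
      have hFid : ∀ t : ℝ, F (Fin.insertNth k t y)
          = t ^ (s - 1 + pk) * |deriv v t| ^ pk * W := by
        intro t
        simp only [hFdef]
        rw [hconf_slice t, hins_k t, hprod t]
        rcases em (t ∈ Set.Icc δk Mk) with h | h
        · have t0 : (0:ℝ) < t := hδk0.trans_le h.1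
          rw [abs_mul, abs_of_nonneg (Real.rpow_nonneg t0.le _),
            Real.mul_rpow (Real.rpow_nonneg t0.le _) (abs_nonneg _),
            ← Real.rpow_mul t0.le,
            show s - 1 + pk = m + ((1 - α) * pk + (α - 1)) by rw [hsdef]; ring,
            Real.rpow_add t0, Real.rpow_add t0]
          ring
        · rw [hdvz t h]
          simp [Real.zero_rpow pkne]
      have hGid : ∀ t : ℝ, G (Fin.insertNth k t y)
          = v t ^ pk * t ^ (s - 1) * W := by
        intro t
        simp only [hGdef]
        rw [hins_k t, hprod t]
        show v t ^ pk * t ^ (m - α * pk) * (t ^ (α - 1) * W) = _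
        rcases em (t ∈ Set.Icc δk Mk) with h | h
        · have t0 : (0:ℝ) < t := hδk0.trans_le h.1
          rw [show s - 1 = m - α * pk + (α - 1) by rw [hsdef]; ring, Real.rpow_add t0]
          ring
        · rw [hvz2 t h, Real.zero_rpow pkne]
          simp
      have hH := hardy1d hpk1 hs0 hδk0 hvC hvsupp hv0'
      have hJ0 : 0 ≤ ∫ t : ℝ, v t ^ pk * t ^ (s - 1) := by
        apply MeasureTheory.integral_nonneg
        intro t
        show (0:ℝ) ≤ v t ^ pk * t ^ (s - 1)
        rcases le_or_gt 0 t with h | h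
        · exact mul_nonneg (Real.rpow_nonneg (hv0' t) _) (Real.rpow_nonneg h _)
        · rw [hvz2 t (fun hm => absurd hm.1 (not_le.mpr (h.trans hδk0))),
            Real.zero_rpow pkne, zero_mul]
      have hCle : ((m + a - pk) / pk) ^ pk ≤ (s / pk) ^ pk :=
        Real.rpow_le_rpow (le_of_lt (div_pos hma pk0))
          ((div_le_div_iff_of_pos_right pk0).mpr hsge) pk0.le
      calc ((m + a - pk) / pk) ^ pk * ∫ t : ℝ, G (Fin.insertNth k t y)
          = ((m + a - pk) / pk) ^ pk * ((∫ t : ℝ, v t ^ pk * t ^ (s - 1)) * W) := by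
            rw [show (fun t : ℝ => G (Fin.insertNth k t y))
                = fun t : ℝ => v t ^ pk * t ^ (s - 1) * W from funext hGid,
              MeasureTheory.integral_mul_const]
        _ ≤ ((s / pk) ^ pk * (∫ t : ℝ, v t ^ pk * t ^ (s - 1))) * W := by
            rw [← mul_assoc]
            exact mul_le_mul_of_nonneg_right (mul_le_mul_of_nonneg_right hCle hJ0) hW0
        _ ≤ (∫ t : ℝ, t ^ (s - 1 + pk) * |deriv v t| ^ pk) * W :=
            mul_le_mul_of_nonneg_right hH hW0
        _ = ∫ t : ℝ, F (Fin.insertNth k t y) := by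
            rw [show (fun t : ℝ => F (Fin.insertNth k t y))
                = fun t : ℝ => t ^ (s - 1 + pk) * |deriv v t| ^ pk * W from funext hFid,
              MeasureTheory.integral_mul_const]
    · push_neg at hpos
      obtain ⟨j, hj⟩ := hpos
      have hzout : ∀ t : ℝ, (Fin.insertNth k t y : Fin (n+1) → ℝ) ∉ tsupport u := by
        intro t hmem
        have h2 := (hK hmem) (k.succAbove j)
        rw [Fin.insertNth_apply_succAbove] at h2
        exact absurd h2 (not_lt.mpr hj)
      have h1 : ∀ t : ℝ, F (Fin.insertNth k t y) = 0 := fun t => hFz _ (hzout t)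
      have h2 : ∀ t : ℝ, G (Fin.insertNth k t y) = 0 := fun t => hGz _ (hzout t)
      simp only [h1, h2, MeasureTheory.integral_zero, mul_zero, le_refl]
  -- assemble
  calc ((m + a - pk) / pk) ^ pk * ∫ x in Ω, G x
      = ((m + a - pk) / pk) ^ pk * ∫ y : Fin n → ℝ, ∫ t : ℝ, G (Fin.insertNth k t y) := by
        rw [hΩG, hFub hGint]
    _ = ∫ y : Fin n → ℝ, ((m + a - pk) / pk) ^ pk * ∫ t : ℝ, G (Fin.insertNth k t y) :=
        (MeasureTheory.integral_const_mul _ _).symm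
    _ ≤ ∫ y : Fin n → ℝ, ∫ t : ℝ, F (Fin.insertNth k t y) :=
        MeasureTheory.integral_mono ((hslice hGint).const_mul _) (hslice hFint) hy
    _ = ∫ x in Ω, F x := by rw [← hFub hFint, ← hΩF]
end
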